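/- arXiv:1709.03451 — 3 statements merged into one kernel-verified Lean document; each statement's English description precedes it below -/
import Mathlib

section
/- Let P ⊂ ℝ³ be a lattice polytope with Δ_P(x) = l₁ ≤ Δ_P(y) = l₂ ≤ Δ_P(z) = l. Suppose Δ_P(x+y) ≥ l₂ and Δ_P(x−y) ≥ l₂, and suppose Δ_P(ax + by + z) ≥ l for all (a,b) ∈ S. Then ls_□(P) = l. -/
/-- The lattice polytope determined by a nonempty finite set `V` of lattice points:
the convex hull in `ℝ³` of the corresponding real points. -/
def latticePoly3 (V : Finset (Fin 3 → ℤ)) : Set (Fin 3 → ℝ) :=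
  convexHull ℝ ((fun v : Fin 3 → ℤ => fun i => (v i : ℝ)) '' (V : Set (Fin 3 → ℤ)))

/-- `Δ_P(a₀·x + a₁·y + a₂·z) = w_a(P)`, the lattice width of `P ⊆ ℝ³` in direction
`a ∈ ℤ³`: the sup minus the inf of the linear form `p ↦ a·p` over `P`. -/
noncomputable def width3 (P : Set (Fin 3 → ℝ)) (a : Fin 3 → ℤ) : ℝ :=
  sSup ((fun p => ∑ i, (a i : ℝ) * p i) '' P) - sInf ((fun p => ∑ i, (a i : ℝ) * p i) '' P)

/-- `T(P) ⊆ [0,l]³` for some affine unimodular transformation `T : p ↦ A·p + v`. -/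
def FitsInCube3 (P : Set (Fin 3 → ℝ)) (l : ℤ) : Prop :=
  ∃ (A : Matrix (Fin 3) (Fin 3) ℤ) (v : Fin 3 → ℤ),
    (A.det = 1 ∨ A.det = -1) ∧
    ∀ p ∈ P, ∀ i, ((A.map (fun z : ℤ => (z : ℝ))).mulVec p + fun j => (v j : ℝ)) i ∈
      Set.Icc (0 : ℝ) (l : ℝ)

/-- The set of lattice widths of `P` in all primitive directions `a ∈ ℤ³`. -/
def widthSet3 (P : Set (Fin 3 → ℝ)) : Set ℝ :=
  {w | ∃ a : Fin 3 → ℤ, Int.gcd (a 0) (Int.gcd (a 1) (a 2)) = 1 ∧ width3 P a = w}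

/-- Membership in the set `S` of Definition 3.5 (for parameters `l₁ ≤ l₂ ≤ l`):
`(a,b) ∈ S` iff (1) `|a| ≥ |b|` implies `|b| ≤ (2l−1)/l₂` and `|a| ≤ (2l−1+|b|·l₂)/l₁`,
and (2) `|b| ≥ |a|` implies `|a| ≤ (2l−1)/l₁` and `|b| ≤ (2l−1+|a|·l₁)/l₂`. -/
def MemS (l₁ l₂ l a b : ℤ) : Prop :=
  (|b| ≤ |a| → ((|b| : ℝ) ≤ (2 * (l : ℝ) - 1) / (l₂ : ℝ) ∧
    (|a| : ℝ) ≤ (2 * (l : ℝ) - 1 + (|b| : ℝ) * (l₂ : ℝ)) / (l₁ : ℝ))) ∧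
  (|a| ≤ |b| → ((|a| : ℝ) ≤ (2 * (l : ℝ) - 1) / (l₁ : ℝ) ∧
    (|b| : ℝ) ≤ (2 * (l : ℝ) - 1 + (|a| : ℝ) * (l₁ : ℝ)) / (l₂ : ℝ)))

namespace LS3

variable (V : Finset (Fin 3 → ℤ)) (hV : V.Nonempty)

/-- integer dot product -/
def dz (a v : Fin 3 → ℤ) : ℤ := ∑ i, a i * v i

/-- integer width of the polytope in direction a -/
def Wz (a : Fin 3 → ℤ) : ℤ := V.sup' hV (dz a) - V.inf' hV (dz a)

lemma dz_add (a b v : Fin 3 → ℤ) : dz (a + b) v = dz a v + dz b v := by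
  simp [dz, add_mul, Finset.sum_add_distrib]

lemma dz_smul (c : ℤ) (a v : Fin 3 → ℤ) : dz (c • a) v = c * dz a v := by
  simp [dz, Finset.mul_sum, mul_assoc]

lemma dz_neg (a v : Fin 3 → ℤ) : dz (-a) v = - dz a v := by
  simp [dz, Finset.sum_neg_distrib]

lemma pair_le_Wz (a : Fin 3 → ℤ) {v w : Fin 3 → ℤ} (hv : v ∈ V) (hw : w ∈ V) :
    dz a v - dz a w ≤ Wz V hV a :=
  sub_le_sub (Finset.le_sup' (dz a) hv) (Finset.inf'_le (dz a) hw)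

lemma exists_pair (a : Fin 3 → ℤ) :
    ∃ v ∈ V, ∃ w ∈ V, Wz V hV a = dz a v - dz a w := by
  obtain ⟨v, hv, hveq⟩ := Finset.exists_mem_eq_sup' hV (dz a)
  obtain ⟨w, hw, hweq⟩ := Finset.exists_mem_eq_inf' hV (dz a)
  exact ⟨v, hv, w, hw, by rw [Wz, hveq, hweq]⟩

lemma Wz_nonneg (a : Fin 3 → ℤ) : 0 ≤ Wz V hV a := by
  have hvv := hV
  obtain ⟨v, hv⟩ := hvv
  have := pair_le_Wz V hV a hv hv
  omega

lemma Wz_add_le (a b : Fin 3 → ℤ) : Wz V hV (a + b) ≤ Wz V hV a + Wz V hV b := by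
  obtain ⟨v, hv, w, hw, heq⟩ := exists_pair V hV (a + b)
  rw [heq, dz_add, dz_add]
  have h1 := pair_le_Wz V hV a hv hw
  have h2 := pair_le_Wz V hV b hv hw
  omega

lemma Wz_neg (a : Fin 3 → ℤ) : Wz V hV (-a) = Wz V hV a := by
  apply le_antisymm
  · obtain ⟨v, hv, w, hw, heq⟩ := exists_pair V hV (-a)
    rw [heq, dz_neg, dz_neg]
    have := pair_le_Wz V hV a hw hv
    omega
  · obtain ⟨v, hv, w, hw, heq⟩ := exists_pair V hV a
    rw [heq]
    have := pair_le_Wz V hV (-a) hw hv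
    rw [dz_neg, dz_neg] at this
    omega

lemma Wz_smul_nonneg {c : ℤ} (hc : 0 ≤ c) (a : Fin 3 → ℤ) :
    Wz V hV (c • a) = c * Wz V hV a := by
  apply le_antisymm
  · obtain ⟨v, hv, w, hw, heq⟩ := exists_pair V hV (c • a)
    rw [heq, dz_smul, dz_smul, ← mul_sub]
    exact mul_le_mul_of_nonneg_left (pair_le_Wz V hV a hv hw) hc
  · obtain ⟨v, hv, w, hw, heq⟩ := exists_pair V hV a
    rw [heq, mul_sub]
    have := pair_le_Wz V hV (c • a) hv hw
    rw [dz_smul, dz_smul] at this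
    exact this

lemma Wz_smul_abs (c : ℤ) (a : Fin 3 → ℤ) : Wz V hV (c • a) = |c| * Wz V hV a := by
  rcases le_or_gt 0 c with h | h
  · rw [Wz_smul_nonneg V hV h, abs_of_nonneg h]
  · have : c • a = -((-c) • a) := by simp
    rw [this, Wz_neg, Wz_smul_nonneg V hV (by omega), abs_of_neg h]

/-- linear functional on ℝ³ given by integer direction -/
def fl (a : Fin 3 → ℤ) : (Fin 3 → ℝ) →ₗ[ℝ] ℝ where
  toFun p := ∑ i, (a i : ℝ) * p i
  map_add' x y := by simp [mul_add, Finset.sum_add_distrib]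
  map_smul' c x := by simp [Finset.mul_sum]; ring_nf; simp [mul_assoc, mul_comm, mul_left_comm]

lemma fl_cast (a v : Fin 3 → ℤ) :
    fl a (fun i => (v i : ℝ)) = ((dz a v : ℤ) : ℝ) := by
  simp [fl, dz]

lemma mem_bounds (a : Fin 3 → ℤ) {p : Fin 3 → ℝ} (hp : p ∈ latticePoly3 V) :
    ((V.inf' hV (dz a) : ℤ) : ℝ) ≤ fl a p ∧ fl a p ≤ ((V.sup' hV (dz a) : ℤ) : ℝ) := by
  have hsub : latticePoly3 V ⊆ (fl a) ⁻¹'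
      (Set.Icc ((V.inf' hV (dz a) : ℤ) : ℝ) ((V.sup' hV (dz a) : ℤ) : ℝ)) := by
    apply convexHull_min
    · rintro x ⟨w, hw, rfl⟩
      have hw' : w ∈ V := hw
      constructor
      · rw [fl_cast]
        exact_mod_cast Int.cast_le.mpr (Finset.inf'_le (dz a) hw')
      · rw [fl_cast]
        exact_mod_cast Int.cast_le.mpr (Finset.le_sup' (dz a) hw')
    · exact (convex_Icc _ _).linear_preimage (fl a)
  exact (hsub hp : _)

lemma castpt_mem (w : Fin 3 → ℤ) (hw : w ∈ V) :
    (fun i => ((w i : ℤ) : ℝ)) ∈ latticePoly3 V :=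
  subset_convexHull ℝ _ ⟨w, hw, rfl⟩

lemma width3_eq (a : Fin 3 → ℤ) :
    width3 (latticePoly3 V) a = ((Wz V hV a : ℤ) : ℝ) := by
  have hgt : IsGreatest ((fun p => ∑ i, (a i : ℝ) * p i) '' latticePoly3 V)
      ((V.sup' hV (dz a) : ℤ) : ℝ) := by
    constructor
    · obtain ⟨w, hw, hweq⟩ := Finset.exists_mem_eq_sup' hV (dz a)
      exact ⟨_, castpt_mem V w hw, by rw [show (fun p => ∑ i, (a i:ℝ) * p i) = fl a from rfl, fl_cast, hweq]⟩
    · rintro x ⟨p, hp, rfl⟩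
      exact (mem_bounds V hV a hp).2
  have hlt : IsLeast ((fun p => ∑ i, (a i : ℝ) * p i) '' latticePoly3 V)
      ((V.inf' hV (dz a) : ℤ) : ℝ) := by
    constructor
    · obtain ⟨w, hw, hweq⟩ := Finset.exists_mem_eq_inf' hV (dz a)
      exact ⟨_, castpt_mem V w hw, by rw [show (fun p => ∑ i, (a i:ℝ) * p i) = fl a from rfl, fl_cast, hweq]⟩
    · rintro x ⟨p, hp, rfl⟩
      exact (mem_bounds V hV a hp).1
  rw [width3, hgt.csSup_eq, hlt.csInf_eq, Wz]
  push_cast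
  ring

section Arith

variable {l₁ l₂ l : ℤ}
variable (h0 : 0 < l₁) (h12 : l₁ ≤ l₂) (h2l : l₂ ≤ l)
variable (hx : Wz V hV ![1,0,0] = l₁) (hy : Wz V hV ![0,1,0] = l₂)
variable (hz : Wz V hV ![0,0,1] = l)
variable (hp : l₂ ≤ Wz V hV ![1,1,0]) (hm : l₂ ≤ Wz V hV ![1,-1,0])

include hx in
lemma WzA (x : ℤ) : Wz V hV ![x,0,0] = |x| * l₁ := by
  have h : (![x,0,0] : Fin 3 → ℤ) = x • ![1,0,0] := by
    funext i; fin_cases i <;> simp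
  rw [h, Wz_smul_abs, hx]

include hy in
lemma WzB (y : ℤ) : Wz V hV ![0,y,0] = |y| * l₂ := by
  have h : (![0,y,0] : Fin 3 → ℤ) = y • ![0,1,0] := by
    funext i; fin_cases i <;> simp
  rw [h, Wz_smul_abs, hy]

include hz in
lemma WzC (z : ℤ) : Wz V hV ![0,0,z] = |z| * l := by
  have h : (![0,0,z] : Fin 3 → ℤ) = z • ![0,0,1] := by
    funext i; fin_cases i <;> simp
  rw [h, Wz_smul_abs, hz]

include hz in
lemma WzE (x y : ℤ) : Wz V hV ![x,y,0] ≤ Wz V hV ![x,y,1] + l := by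
  have h : (![x,y,0] : Fin 3 → ℤ) = ![x,y,1] + ![0,0,-1] := by
    funext i; fin_cases i <;> simp
  calc Wz V hV ![x,y,0] ≤ Wz V hV ![x,y,1] + Wz V hV ![0,0,-1] := by
        rw [h]; exact Wz_add_le V hV _ _
    _ = Wz V hV ![x,y,1] + l := by
        rw [WzC V hV hz (-1)]; simp

include hx hy hz in
lemma WzF (x y : ℤ) : |x| * l₁ ≤ Wz V hV ![x,y,1] + (|y| * l₂ + l) := by
  have h : (![x,0,0] : Fin 3 → ℤ) = ![x,y,1] + ![0,-y,-1] := by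
    funext i; fin_cases i <;> simp
  have h2 : (![0,-y,-1] : Fin 3 → ℤ) = ![0,-y,0] + ![0,0,-1] := by
    funext i; fin_cases i <;> simp
  have hb : Wz V hV ![0,-y,-1] ≤ |y| * l₂ + l := by
    calc Wz V hV ![0,-y,-1] ≤ Wz V hV ![0,-y,0] + Wz V hV ![0,0,-1] := by
          rw [h2]; exact Wz_add_le V hV _ _
      _ ≤ |y| * l₂ + l := by rw [WzB V hV hy, WzC V hV hz]; simp
  calc |x| * l₁ = Wz V hV ![x,0,0] := (WzA V hV hx x).symm
    _ ≤ Wz V hV ![x,y,1] + Wz V hV ![0,-y,-1] := by rw [h]; exact Wz_add_le V hV _ _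
    _ ≤ Wz V hV ![x,y,1] + (|y| * l₂ + l) := by omega

include hx hy hz in
lemma WzG (x y : ℤ) : |y| * l₂ ≤ Wz V hV ![x,y,1] + (|x| * l₁ + l) := by
  have h : (![0,y,0] : Fin 3 → ℤ) = ![x,y,1] + ![-x,0,-1] := by
    funext i; fin_cases i <;> simp
  have h2 : (![-x,0,-1] : Fin 3 → ℤ) = ![-x,0,0] + ![0,0,-1] := by
    funext i; fin_cases i <;> simp
  have hb : Wz V hV ![-x,0,-1] ≤ |x| * l₁ + l := by
    calc Wz V hV ![-x,0,-1] ≤ Wz V hV ![-x,0,0] + Wz V hV ![0,0,-1] := by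
          rw [h2]; exact Wz_add_le V hV _ _
      _ ≤ |x| * l₁ + l := by rw [WzA V hV hx, WzC V hV hz]; simp
  calc |y| * l₂ = Wz V hV ![0,y,0] := (WzB V hV hy y).symm
    _ ≤ Wz V hV ![x,y,1] + Wz V hV ![-x,0,-1] := by rw [h]; exact Wz_add_le V hV _ _
    _ ≤ Wz V hV ![x,y,1] + (|x| * l₁ + l) := by omega

-- 2D lemmas with explicit signs
include h12 hy hp in
lemma Wz2D_A {x y : ℤ} (hx1 : 1 ≤ x) (hy1 : 1 ≤ y) (hyx : y ≤ x) :
    y * l₂ ≤ Wz V hV ![x,y,0] := by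
  have h : x • (![1,1,0] : Fin 3 → ℤ) = ![x,y,0] + (x - y) • ![0,1,0] := by
    funext i; fin_cases i <;> simp <;> ring
  have hle : x * Wz V hV ![1,1,0] ≤ Wz V hV ![x,y,0] + (x - y) * l₂ := by
    calc x * Wz V hV ![1,1,0] = Wz V hV (x • ![1,1,0]) :=
          (Wz_smul_nonneg V hV (by omega) _).symm
      _ ≤ Wz V hV ![x,y,0] + Wz V hV ((x - y) • ![0,1,0]) := by
          rw [h]; exact Wz_add_le V hV _ _
      _ = Wz V hV ![x,y,0] + (x - y) * l₂ := by
          rw [Wz_smul_nonneg V hV (by omega), hy]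
  have hge : x * l₂ ≤ x * Wz V hV ![1,1,0] :=
    mul_le_mul_of_nonneg_left hp (by omega)
  have hr : x * l₂ - (x - y) * l₂ = y * l₂ := by ring
  omega

include h12 hy hm in
lemma Wz2D_B {x y : ℤ} (hx1 : 1 ≤ x) (hy1 : y ≤ -1) (hyx : -y ≤ x) :
    -y * l₂ ≤ Wz V hV ![x,y,0] := by
  have h : x • (![1,-1,0] : Fin 3 → ℤ) = ![x,y,0] + (-x - y) • ![0,1,0] := by
    funext i; fin_cases i <;> simp <;> ring
  have hle : x * Wz V hV ![1,-1,0] ≤ Wz V hV ![x,y,0] + (x + y) * l₂ := by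
    calc x * Wz V hV ![1,-1,0] = Wz V hV (x • ![1,-1,0]) :=
          (Wz_smul_nonneg V hV (by omega) _).symm
      _ ≤ Wz V hV ![x,y,0] + Wz V hV ((-x - y) • ![0,1,0]) := by
          rw [h]; exact Wz_add_le V hV _ _
      _ = Wz V hV ![x,y,0] + (x + y) * l₂ := by
          rw [Wz_smul_abs, hy, abs_of_nonpos (by omega : -x - y ≤ 0)]; ring_nf
  have hge : x * l₂ ≤ x * Wz V hV ![1,-1,0] :=
    mul_le_mul_of_nonneg_left hm (by omega)
  have hr : x * l₂ - (x + y) * l₂ = -y * l₂ := by ring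
  omega

include h12 hx hy hp in
lemma Wz2D'_A {x y : ℤ} (hx1 : 1 ≤ x) (hy1 : 1 ≤ y) (hxy : x ≤ y) :
    x * l₁ ≤ Wz V hV ![x,y,0] := by
  have h : y • (![1,1,0] : Fin 3 → ℤ) = ![x,y,0] + (y - x) • ![1,0,0] := by
    funext i; fin_cases i <;> simp <;> ring
  have hle : y * Wz V hV ![1,1,0] ≤ Wz V hV ![x,y,0] + (y - x) * l₁ := by
    calc y * Wz V hV ![1,1,0] = Wz V hV (y • ![1,1,0]) :=
          (Wz_smul_nonneg V hV (by omega) _).symm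
      _ ≤ Wz V hV ![x,y,0] + Wz V hV ((y - x) • ![1,0,0]) := by
          rw [h]; exact Wz_add_le V hV _ _
      _ = Wz V hV ![x,y,0] + (y - x) * l₁ := by
          rw [Wz_smul_nonneg V hV (by omega), hx]
  have hge : y * l₂ ≤ y * Wz V hV ![1,1,0] :=
    mul_le_mul_of_nonneg_left hp (by omega)
  have h1 : y * l₁ ≤ y * l₂ := mul_le_mul_of_nonneg_left h12 (by omega)
  have hr : y * l₁ - (y - x) * l₁ = x * l₁ := by ring
  omega

include h12 hx hy hm in
lemma Wz2D'_B {x y : ℤ} (hx1 : x ≤ -1) (hy1 : 1 ≤ y) (hxy : -x ≤ y) :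
    -x * l₁ ≤ Wz V hV ![x,y,0] := by
  have h : y • (![(-1),1,0] : Fin 3 → ℤ) = ![x,y,0] + (-y - x) • ![1,0,0] := by
    funext i; fin_cases i <;> simp <;> ring
  have hneg : (![(-1),1,0] : Fin 3 → ℤ) = -(![1,-1,0]) := by
    funext i; fin_cases i <;> simp
  have hple : l₂ ≤ Wz V hV ![(-1),1,0] := by rw [hneg, Wz_neg]; exact hm
  have hle : y * Wz V hV ![(-1),1,0] ≤ Wz V hV ![x,y,0] + (y + x) * l₁ := by
    calc y * Wz V hV ![(-1),1,0] = Wz V hV (y • ![(-1),1,0]) :=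
          (Wz_smul_nonneg V hV (by omega) _).symm
      _ ≤ Wz V hV ![x,y,0] + Wz V hV ((-y - x) • ![1,0,0]) := by
          rw [h]; exact Wz_add_le V hV _ _
      _ = Wz V hV ![x,y,0] + (y + x) * l₁ := by
          rw [Wz_smul_abs, hx, abs_of_nonpos (by omega : -y - x ≤ 0)]; ring_nf
  have hge : y * l₂ ≤ y * Wz V hV ![(-1),1,0] :=
    mul_le_mul_of_nonneg_left hple (by omega)
  have h1 : y * l₁ ≤ y * l₂ := mul_le_mul_of_nonneg_left h12 (by omega)
  have hr : y * l₁ - (y + x) * l₁ = -x * l₁ := by ring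
  omega

lemma vecneg (x y z : ℤ) : (![x,y,z] : Fin 3 → ℤ) = -(![(-x),(-y),(-z)]) := by
  funext i; fin_cases i <;> simp

include h12 hx hy hp hm in
lemma Wz2D (x y : ℤ) (hyx : |y| ≤ |x|) (hy1 : 1 ≤ |y|) :
    |y| * l₂ ≤ Wz V hV ![x,y,0] := by
  have hy0 : y ≠ 0 := by rintro rfl; simp at hy1
  have hx0 : x ≠ 0 := by rintro rfl; simp at hyx; exact hy0 hyx
  rcases hx0.lt_or_gt with hxneg | hxpos
  · rw [vecneg, Wz_neg]
    simp only [neg_zero]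
    rcases hy0.lt_or_gt with hyneg | hypos
    · rw [abs_of_neg hyneg]
      rw [abs_of_neg hyneg, abs_of_neg hxneg] at hyx
      exact Wz2D_A V hV h12 hy hp (by omega) (by omega) (by omega)
    · rw [abs_of_pos hypos]
      rw [abs_of_pos hypos, abs_of_neg hxneg] at hyx
      simpa using Wz2D_B V hV h12 hy hm (x := -x) (y := -y) (by omega) (by omega) (by omega)
  · rcases hy0.lt_or_gt with hyneg | hypos
    · rw [abs_of_neg hyneg]
      rw [abs_of_neg hyneg, abs_of_pos hxpos] at hyx
      exact Wz2D_B V hV h12 hy hm (by omega) (by omega) (by omega)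
    · rw [abs_of_pos hypos]
      rw [abs_of_pos hypos, abs_of_pos hxpos] at hyx
      exact Wz2D_A V hV h12 hy hp (by omega) (by omega) (by omega)

include h12 hx hy hp hm in
lemma Wz2D' (x y : ℤ) (hxy : |x| ≤ |y|) (hx1 : 1 ≤ |x|) :
    |x| * l₁ ≤ Wz V hV ![x,y,0] := by
  have hx0 : x ≠ 0 := by rintro rfl; simp at hx1
  have hy0 : y ≠ 0 := by rintro rfl; simp at hxy; exact hx0 hxy
  rcases hy0.lt_or_gt with hyneg | hypos
  · rw [vecneg, Wz_neg]
    simp only [neg_zero]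
    rcases hx0.lt_or_gt with hxneg | hxpos
    · rw [abs_of_neg hxneg]
      rw [abs_of_neg hxneg, abs_of_neg hyneg] at hxy
      exact Wz2D'_A V hV h12 hx hy hp (by omega) (by omega) (by omega)
    · rw [abs_of_pos hxpos]
      rw [abs_of_pos hxpos, abs_of_neg hyneg] at hxy
      simpa using Wz2D'_B V hV h12 hx hy hm (x := -x) (y := -y) (by omega) (by omega) (by omega)
  · rcases hx0.lt_or_gt with hxneg | hxpos
    · rw [abs_of_neg hxneg]
      rw [abs_of_neg hxneg, abs_of_pos hypos] at hxy
      exact Wz2D'_B V hV h12 hx hy hm (by omega) (by omega) (by omega)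
    · rw [abs_of_pos hxpos]
      rw [abs_of_pos hxpos, abs_of_pos hypos] at hxy
      exact Wz2D'_A V hV h12 hx hy hp (by omega) (by omega) (by omega)


lemma memS_of_int {l₁ l₂ l a b : ℤ} (h0 : 0 < l₁) (h12 : l₁ ≤ l₂)
    (h1 : |b| ≤ |a| → (|b| * l₂ ≤ 2*l - 1 ∧ |a| * l₁ ≤ 2*l - 1 + |b| * l₂))
    (h2 : |a| ≤ |b| → (|a| * l₁ ≤ 2*l - 1 ∧ |b| * l₂ ≤ 2*l - 1 + |a| * l₁)) :
    MemS l₁ l₂ l a b := by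
  have hl1 : (0:ℝ) < (l₁:ℝ) := by exact_mod_cast h0
  have hl2 : (0:ℝ) < (l₂:ℝ) := by exact_mod_cast lt_of_lt_of_le h0 h12
  constructor
  · intro hba
    obtain ⟨c1, c2⟩ := h1 hba
    constructor
    · rw [le_div_iff₀ hl2]; exact_mod_cast c1
    · rw [le_div_iff₀ hl1]; exact_mod_cast c2
  · intro hab
    obtain ⟨c1, c2⟩ := h2 hab
    constructor
    · rw [le_div_iff₀ hl1]; exact_mod_cast c1
    · rw [le_div_iff₀ hl2]; exact_mod_cast c2

include h0 h12 h2l hx hy hz hp hm in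
lemma step1 (hS' : ∀ a b : ℤ, MemS l₁ l₂ l a b → l ≤ Wz V hV ![a,b,1])
    (x y : ℤ) : l ≤ Wz V hV ![x,y,1] := by
  have hxnn : 0 ≤ |x| * l₁ := mul_nonneg (abs_nonneg x) (by omega)
  have hynn : 0 ≤ |y| * l₂ := mul_nonneg (abs_nonneg y) (by omega)
  rcases le_total |y| |x| with hc | hc
  · by_cases hA : |y| * l₂ ≤ 2*l - 1
    · by_cases hB : |x| * l₁ ≤ 2*l - 1 + |y| * l₂
      · refine hS' x y (memS_of_int h0 h12 (fun _ => ⟨hA, hB⟩) (fun hxy2 => ⟨?_, by omega⟩))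
        have hxe : |x| * l₁ ≤ |y| * l₂ :=
          mul_le_mul hxy2 h12 (by omega) (abs_nonneg y)
        omega
      · have hg : 2*l + |y| * l₂ ≤ |x| * l₁ := by omega
        have hF := WzF V hV hx hy hz x y
        omega
    · have hy0 : y ≠ 0 := by
        rintro rfl
        simp only [abs_zero, zero_mul] at hA
        omega
      have hy1 : 1 ≤ |y| := Int.one_le_abs (by exact hy0)
      have h2d := Wz2D V hV h12 hx hy hp hm x y hc hy1
      have hE := WzE V hV hz x y
      omega
  · by_cases hA : |x| * l₁ ≤ 2*l - 1
    · by_cases hB : |y| * l₂ ≤ 2*l - 1 + |x| * l₁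
      · by_cases hA2 : |y| * l₂ ≤ 2*l - 1
        · exact hS' x y (memS_of_int h0 h12
            (fun hba => by constructor <;> omega) (fun _ => ⟨hA, hB⟩))
        · rcases le_or_gt |y| |x| with hyx2 | hyx2
          · have hy0 : y ≠ 0 := by
              rintro rfl
              simp only [abs_zero, zero_mul] at hA2
              omega
            have hy1 : 1 ≤ |y| := Int.one_le_abs (by exact hy0)
            have h2d := Wz2D V hV h12 hx hy hp hm x y hyx2 hy1
            have hE := WzE V hV hz x y
            omega
          · exact hS' x y (memS_of_int h0 h12
              (fun hba => by omega) (fun _ => ⟨hA, hB⟩))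
      · have hg : 2*l + |x| * l₁ ≤ |y| * l₂ := by omega
        have hG := WzG V hV hx hy hz x y
        omega
    · have hx0 : x ≠ 0 := by
        rintro rfl
        simp only [abs_zero, zero_mul] at hA
        omega
      have hx1 : 1 ≤ |x| := Int.one_le_abs (by exact hx0)
      have h2d := Wz2D' V hV h12 hx hy hp hm x y hc hx1
      have hE := WzE V hV hz x y
      have hxll : |x| * l₁ ≤ |x| * l₁ := le_refl _
      omega

lemma round_odd {c : ℤ} (hc : 1 ≤ c) (hodd : Odd c) (a : ℤ) :
    ∃ x r : ℤ, a = c * x + r ∧ 2 * |r| ≤ c - 1 := by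
  obtain ⟨k, hk⟩ := hodd
  have h1 := Int.mul_ediv_add_emod a c
  have h2 := Int.emod_nonneg a (by omega : c ≠ 0)
  have h3 := Int.emod_lt_of_pos a (by omega : 0 < c)
  by_cases h : 2 * (a % c) ≤ c - 1
  · exact ⟨a / c, a % c, by omega, by rw [abs_of_nonneg h2]; omega⟩
  · refine ⟨a / c + 1, a % c - c, ?_, by rw [abs_of_nonpos (by omega)]; omega⟩
    have hr : c * (a / c + 1) = c * (a / c) + c := by ring
    omega

include h0 h12 h2l hx hy hz hp hm in
lemma claimD_pos (hS' : ∀ a b : ℤ, MemS l₁ l₂ l a b → l ≤ Wz V hV ![a,b,1])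
    {a b c : ℤ} (hc : 1 ≤ c) (hodd : Odd c) : l ≤ Wz V hV ![a,b,c] := by
  obtain ⟨x, ra, hxa, hra⟩ := round_odd hc hodd a
  obtain ⟨y, rb, hyb, hrb⟩ := round_odd hc hodd b
  have hid : c • (![x,y,1] : Fin 3 → ℤ)
      = ![a,b,c] + ((-ra) • ![1,0,0] + (-rb) • ![0,1,0]) := by
    funext i; fin_cases i <;> simp <;> omega
  have hsum := Wz_add_le V hV ((-ra) • (![1,0,0] : Fin 3 → ℤ)) ((-rb) • ![0,1,0])
  have hq1 : Wz V hV ((-ra) • (![1,0,0] : Fin 3 → ℤ)) = |ra| * l₁ := by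
    rw [Wz_smul_abs, hx, abs_neg]
  have hq2 : Wz V hV ((-rb) • (![0,1,0] : Fin 3 → ℤ)) = |rb| * l₂ := by
    rw [Wz_smul_abs, hy, abs_neg]
  have h1 : c * Wz V hV ![x,y,1]
      ≤ Wz V hV ![a,b,c] + (|ra| * l₁ + |rb| * l₂) := by
    calc c * Wz V hV ![x,y,1] = Wz V hV (c • ![x,y,1]) :=
          (Wz_smul_nonneg V hV (by omega) _).symm
      _ ≤ Wz V hV ![a,b,c] + Wz V hV ((-ra) • ![1,0,0] + (-rb) • ![0,1,0]) := by
          rw [hid]; exact Wz_add_le V hV _ _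
      _ ≤ Wz V hV ![a,b,c] + (|ra| * l₁ + |rb| * l₂) := by omega
  have h2 : c * l ≤ c * Wz V hV ![x,y,1] :=
    mul_le_mul_of_nonneg_left (step1 V hV h0 h12 h2l hx hy hz hp hm hS' x y) (by omega)
  have h3 : |ra| * l₁ ≤ |ra| * l := mul_le_mul_of_nonneg_left (by omega) (abs_nonneg ra)
  have h4 : |rb| * l₂ ≤ |rb| * l := mul_le_mul_of_nonneg_left (by omega) (abs_nonneg rb)
  have h5 : |ra| * l + |rb| * l ≤ (c - 1) * l := by
    have hs : |ra| + |rb| ≤ c - 1 := by omega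
    calc |ra| * l + |rb| * l = (|ra| + |rb|) * l := by ring
      _ ≤ (c-1) * l := mul_le_mul_of_nonneg_right hs (by omega)
  have h6 : c * l - (c-1) * l = l := by ring
  omega

include h0 h12 h2l hx hy hz hp hm in
lemma claimD (hS' : ∀ a b : ℤ, MemS l₁ l₂ l a b → l ≤ Wz V hV ![a,b,1])
    {a b c : ℤ} (hodd : Odd c) : l ≤ Wz V hV ![a,b,c] := by
  rcases le_or_gt 1 c with hc | hc
  · exact claimD_pos V hV h0 h12 h2l hx hy hz hp hm hS' hc hodd
  · have hc0 : c ≠ 0 := by rintro rfl; exact (Int.not_even_iff_odd.mpr hodd) Even.zero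
    have hcneg : c ≤ -1 := by omega
    rw [vecneg, Wz_neg]
    exact claimD_pos V hV h0 h12 h2l hx hy hz hp hm hS' (by omega) hodd.neg


end Arith



lemma row_widths_le (A : Matrix (Fin 3) (Fin 3) ℤ) (vv : Fin 3 → ℤ) (k : ℤ)
    (hcond : ∀ p ∈ latticePoly3 V, ∀ i,
      ((A.map (fun z : ℤ => (z : ℝ))).mulVec p + fun j => (vv j : ℝ)) i ∈
        Set.Icc (0 : ℝ) (k : ℝ)) (i : Fin 3) :
    Wz V hV (fun j => A i j) ≤ k := by
  obtain ⟨v, hv, w, hw, heq⟩ := exists_pair V hV (fun j => A i j)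
  have hval : ∀ u : Fin 3 → ℤ,
      ((A.map (fun z : ℤ => (z : ℝ))).mulVec (fun j => (u j : ℝ)) + fun j => (vv j : ℝ)) i
        = ((dz (fun j => A i j) u : ℤ) : ℝ) + (vv i : ℝ) := by
    intro u
    simp only [Pi.add_apply, Matrix.mulVec, dotProduct, Matrix.map_apply, dz]
    push_cast
    ring
  have hv' := hcond _ (castpt_mem V v hv) i
  have hw' := hcond _ (castpt_mem V w hw) i
  rw [hval v] at hv'
  rw [hval w] at hw'
  have hre : ((dz (fun j => A i j) v : ℤ) : ℝ) - ((dz (fun j => A i j) w : ℤ) : ℝ) ≤ (k:ℝ) := by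
    have h1 := hv'.2
    have h2 := hw'.1
    linarith
  rw [heq]
  exact_mod_cast hre

lemma exists_odd_col (A : Matrix (Fin 3) (Fin 3) ℤ) (hdet : A.det = 1 ∨ A.det = -1) :
    ∃ i, Odd (A i 2) := by
  by_contra h
  push_neg at h
  have heven : ∀ i, ((A i 2 : ℤ) : ZMod 2) = 0 := by
    intro i
    rw [ZMod.intCast_zmod_eq_zero_iff_dvd]
    have he : Even (A i 2) := Int.not_odd_iff_even.mp (h i)
    exact_mod_cast he.two_dvd
  have hdet0 : (A.map (Int.cast : ℤ → ZMod 2)).det = 0 :=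
    Matrix.det_eq_zero_of_column_eq_zero 2 (fun i => by
      simpa [Matrix.map_apply] using heven i)
  have hdet1 : ((A.det : ℤ) : ZMod 2) = (A.map (Int.cast : ℤ → ZMod 2)).det := by
    have h2 := RingHom.map_det (Int.castRingHom (ZMod 2)) A
    simpa [RingHom.mapMatrix_apply, Int.coe_castRingHom] using h2
  rcases hdet with h1 | h1 <;> rw [h1] at hdet1 <;> rw [hdet0] at hdet1 <;>
    revert hdet1 <;> decide

end LS3

/-- Theorem (main 3D result): with `Δ_P(x) = l₁ ≤ Δ_P(y) = l₂ ≤ Δ_P(z) = l`,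
`Δ_P(x±y) ≥ l₂`, and `Δ_P(ax + by + z) ≥ l` for all `(a,b) ∈ S`, we have
`ls_□(P) = l`. -/
theorem latticeSize3_eq (V : Finset (Fin 3 → ℤ)) (hV : V.Nonempty)
    (P : Set (Fin 3 → ℝ)) (hP : P = latticePoly3 V) (l₁ l₂ l : ℤ)
    (h0 : 0 < l₁) (h12 : l₁ ≤ l₂) (h2l : l₂ ≤ l)
    (hx : width3 P ![1, 0, 0] = (l₁ : ℝ)) (hy : width3 P ![0, 1, 0] = (l₂ : ℝ))
    (hz : width3 P ![0, 0, 1] = (l : ℝ))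
    (hp : (l₂ : ℝ) ≤ width3 P ![1, 1, 0]) (hm : (l₂ : ℝ) ≤ width3 P ![1, -1, 0])
    (hS : ∀ a b : ℤ, MemS l₁ l₂ l a b → (l : ℝ) ≤ width3 P ![a, b, 1]) :
    IsLeast {k : ℤ | FitsInCube3 P k} l := by
  subst hP
  rw [LS3.width3_eq V hV] at hx hy hz hp hm
  have hx' : LS3.Wz V hV ![1,0,0] = l₁ := by exact_mod_cast hx
  have hy' : LS3.Wz V hV ![0,1,0] = l₂ := by exact_mod_cast hy
  have hz' : LS3.Wz V hV ![0,0,1] = l := by exact_mod_cast hz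
  have hp' : l₂ ≤ LS3.Wz V hV ![1,1,0] := by exact_mod_cast hp
  have hm' : l₂ ≤ LS3.Wz V hV ![1,-1,0] := by exact_mod_cast hm
  have hS' : ∀ a b : ℤ, MemS l₁ l₂ l a b → l ≤ LS3.Wz V hV ![a,b,1] := by
    intro a b hmem
    have := hS a b hmem
    rw [LS3.width3_eq V hV] at this
    exact_mod_cast this
  constructor
  · -- l ∈ the set : fits in cube of size l with A = 1
    set d : Fin 3 → (Fin 3 → ℤ) := ![![1,0,0], ![0,1,0], ![0,0,1]] with hd
    refine ⟨1, fun i => - V.inf' hV (LS3.dz (d i)), Or.inl Matrix.det_one, ?_⟩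
    intro p hp'' i
    have hme : (((1 : Matrix (Fin 3) (Fin 3) ℤ).map (fun z : ℤ => (z : ℝ))).mulVec p
        + fun j => ((- V.inf' hV (LS3.dz (d j)) : ℤ) : ℝ)) i
        = p i - ((V.inf' hV (LS3.dz (d i)) : ℤ) : ℝ) := by
      rw [Matrix.map_one _ (by norm_num) (by norm_num), Matrix.one_mulVec]
      simp only [Pi.add_apply]
      push_cast
      ring
    rw [hme]
    have hb := LS3.mem_bounds V hV (d i) hp''
    have hfl : LS3.fl (d i) p = p i := by
      fin_cases i <;>
        simp [LS3.fl, hd, Fin.sum_univ_three, LinearMap.coe_mk, AddHom.coe_mk]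
    rw [hfl] at hb
    have hWl : LS3.Wz V hV (d i) ≤ l := by
      fin_cases i
      · show LS3.Wz V hV ![1,0,0] ≤ l
        omega
      · show LS3.Wz V hV ![0,1,0] ≤ l
        omega
      · show LS3.Wz V hV ![0,0,1] ≤ l
        omega
    have hWc : ((V.sup' hV (LS3.dz (d i)) : ℤ) : ℝ) - ((V.inf' hV (LS3.dz (d i)) : ℤ) : ℝ)
        ≤ (l : ℝ) := by
      have : ((LS3.Wz V hV (d i) : ℤ) : ℝ) ≤ (l : ℝ) := by exact_mod_cast hWl
      rw [LS3.Wz] at this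
      push_cast at this ⊢
      linarith
    constructor
    · have := hb.1
      linarith
    · have := hb.2
      linarith
  · -- lower bound
    rintro k ⟨A, vv, hdet, hcond⟩
    obtain ⟨i, hodd⟩ := LS3.exists_odd_col A hdet
    have hrow := LS3.row_widths_le V hV A vv k hcond i
    have hre : (fun j => A i j) = ![A i 0, A i 1, A i 2] := by
      funext j; fin_cases j <;> rfl
    rw [hre] at hrow
    have hDD : l ≤ LS3.Wz V hV ![A i 0, A i 1, A i 2] :=
      LS3.claimD V hV h0 h12 h2l hx' hy' hz' hp' hm' hS' hodd
    omega
end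

section
/- Let P ⊂ ℝ³ be a lattice polytope with Δ_P(x) = l₁ ≤ Δ_P(y) = l₂ ≤ Δ_P(z) = l. Suppose Δ_P(x+y) ≥ l₂ and Δ_P(x−y) ≥ l₂, and suppose Δ_P(ax + by + z) ≥ l for all integers a, b. Then the lattice width of P satisfies w(P) = min(l₁, m), where m is the minimum of w_{(a,b,c)}(P) over all (a,b,c) ∈ ℤ³ with |a| = |b| = 1 and |c| = 2. -/
namespace LW3Aux

/-- Integer dot product of a direction with a lattice point. -/
def dotf (d v : Fin 3 → ℤ) : ℤ := ∑ i, d i * v i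

variable (V : Finset (Fin 3 → ℤ)) (hV : V.Nonempty)

/-- The (integer) width of the lattice polytope spanned by `V` in direction `d`. -/
def NN (d : Fin 3 → ℤ) : ℤ := V.sup' hV (dotf d) - V.inf' hV (dotf d)

lemma dotf_add (u v w : Fin 3 → ℤ) : dotf (u + v) w = dotf u w + dotf v w := by
  simp [dotf, add_mul, Finset.sum_add_distrib]

lemma dotf_neg (u w : Fin 3 → ℤ) : dotf (-u) w = -dotf u w := by
  simp [dotf, Finset.sum_neg_distrib]

lemma dotf_smul (k : ℤ) (u w : Fin 3 → ℤ) : dotf (k • u) w = k * dotf u w := by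
  simp [dotf, Finset.mul_sum, mul_assoc]

lemma inf'_le_sup' (d : Fin 3 → ℤ) : V.inf' hV (dotf d) ≤ V.sup' hV (dotf d) := by
  obtain ⟨x, hx⟩ := hV
  exact le_trans (Finset.inf'_le _ hx) (Finset.le_sup' _ hx)

lemma NN_nonneg (d : Fin 3 → ℤ) : 0 ≤ NN V hV d :=
  sub_nonneg.mpr (inf'_le_sup' V hV d)

lemma sup'_neg (d : Fin 3 → ℤ) : V.sup' hV (dotf (-d)) = -V.inf' hV (dotf d) := by
  apply le_antisymm
  · apply Finset.sup'_le
    intro w hw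
    rw [dotf_neg]
    exact neg_le_neg (Finset.inf'_le _ hw)
  · obtain ⟨b, hb, hbe⟩ := Finset.exists_mem_eq_inf' hV (dotf d)
    rw [hbe, ← dotf_neg]
    exact Finset.le_sup' _ hb

lemma inf'_neg (d : Fin 3 → ℤ) : V.inf' hV (dotf (-d)) = -V.sup' hV (dotf d) := by
  have h := sup'_neg V hV (-d)
  rw [neg_neg] at h
  omega

lemma NN_neg (d : Fin 3 → ℤ) : NN V hV (-d) = NN V hV d := by
  unfold NN
  rw [sup'_neg, inf'_neg]
  ring

lemma NN_add_le (u v : Fin 3 → ℤ) : NN V hV (u + v) ≤ NN V hV u + NN V hV v := by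
  unfold NN
  have h1 : V.sup' hV (dotf (u + v)) ≤ V.sup' hV (dotf u) + V.sup' hV (dotf v) := by
    apply Finset.sup'_le
    intro w hw
    rw [dotf_add]
    exact add_le_add (Finset.le_sup' _ hw) (Finset.le_sup' _ hw)
  have h2 : V.inf' hV (dotf u) + V.inf' hV (dotf v) ≤ V.inf' hV (dotf (u + v)) := by
    apply Finset.le_inf'
    intro w hw
    rw [dotf_add]
    exact add_le_add (Finset.inf'_le _ hw) (Finset.inf'_le _ hw)
  omega

lemma NN_smul_nonneg (k : ℤ) (hk : 0 ≤ k) (u : Fin 3 → ℤ) :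
    NN V hV (k • u) = k * NN V hV u := by
  unfold NN
  have h1 : V.sup' hV (dotf (k • u)) = k * V.sup' hV (dotf u) := by
    apply le_antisymm
    · apply Finset.sup'_le
      intro w hw
      rw [dotf_smul]
      exact mul_le_mul_of_nonneg_left (Finset.le_sup' _ hw) hk
    · obtain ⟨b, hb, hbe⟩ := Finset.exists_mem_eq_sup' hV (dotf u)
      rw [hbe, ← dotf_smul]
      exact Finset.le_sup' _ hb
  have h2 : V.inf' hV (dotf (k • u)) = k * V.inf' hV (dotf u) := by
    apply le_antisymm
    · obtain ⟨b, hb, hbe⟩ := Finset.exists_mem_eq_inf' hV (dotf u)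
      rw [hbe, ← dotf_smul]
      exact Finset.inf'_le _ hb
    · apply Finset.le_inf'
      intro w hw
      rw [dotf_smul]
      exact mul_le_mul_of_nonneg_left (Finset.inf'_le _ hw) hk
  rw [h1, h2]; ring

lemma NN_smul_abs (k : ℤ) (u : Fin 3 → ℤ) : NN V hV (k • u) = |k| * NN V hV u := by
  rcases le_or_gt 0 k with hk | hk
  · rw [NN_smul_nonneg V hV k hk, abs_of_nonneg hk]
  · have : k • u = -((-k) • u) := by
      funext i; simp
    rw [this, NN_neg, NN_smul_nonneg V hV (-k) (by omega), abs_of_neg hk]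

/-- Master certificate inequality: whenever `k • g = f₁ + f₂`,
`k * NN g ≤ NN f₁ + NN f₂`. -/
lemma cert2 (k : ℤ) (hk : 0 ≤ k) (g f₁ f₂ : Fin 3 → ℤ) (h : k • g = f₁ + f₂) :
    k * NN V hV g ≤ NN V hV f₁ + NN V hV f₂ := by
  rw [← NN_smul_nonneg V hV k hk, h]
  exact NN_add_le V hV f₁ f₂

/-- Certificate: `k • g = f + p • e₁ + q • e₂ + r • e₃` implies
`k * NN g ≤ NN f + |p| * NN e₁ + |q| * NN e₂ + |r| * NN e₃`. -/
lemma cert (k : ℤ) (hk : 0 ≤ k) (g f : Fin 3 → ℤ) (p q r : ℤ)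
    (h : k • g = f + (p • ![1,0,0] + (q • ![0,1,0] + r • ![0,0,1]))) :
    k * NN V hV g ≤ NN V hV f + (|p| * NN V hV ![1,0,0] +
      (|q| * NN V hV ![0,1,0] + |r| * NN V hV ![0,0,1])) := by
  calc k * NN V hV g ≤ NN V hV f + NN V hV (p • ![1,0,0] + (q • ![0,1,0] + r • ![0,0,1])) :=
        cert2 V hV k hk _ _ _ h
    _ ≤ _ := by
        have h1 := NN_add_le V hV (p • ![1,0,0]) (q • ![0,1,0] + r • ![0,0,1])
        have h2 := NN_add_le V hV (q • ![0,1,0]) (r • ![0,0,1])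
        rw [NN_smul_abs] at h1
        rw [NN_smul_abs, NN_smul_abs] at h2
        omega


lemma linmap (d : Fin 3 → ℤ) :
    IsLinearMap ℝ (fun p : Fin 3 → ℝ => ∑ i, (d i : ℝ) * p i) := by
  constructor
  · intro x y
    rw [← Finset.sum_add_distrib]
    congr 1; funext i; simp [mul_add]
  · intro c x
    simp only [Pi.smul_apply, smul_eq_mul, Finset.mul_sum]
    congr 1; funext i; ring

lemma dot_cast (d v : Fin 3 → ℤ) :
    (∑ i, (d i : ℝ) * ((fun j => ((v j : ℝ))) i)) = ((dotf d v : ℤ) : ℝ) := by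
  simp [dotf]

lemma bridge (d : Fin 3 → ℤ) : width3 (latticePoly3 V) d = ((NN V hV d : ℤ) : ℝ) := by
  classical
  set f : (Fin 3 → ℝ) → ℝ := fun p => ∑ i, (d i : ℝ) * p i with hf
  set S := V.sup' hV (dotf d) with hS
  set I := V.inf' hV (dotf d) with hI
  have hgr : IsGreatest (f '' latticePoly3 V) ((S : ℤ) : ℝ) := by
    constructor
    · obtain ⟨b, hb, hbe⟩ := Finset.exists_mem_eq_sup' hV (dotf d)
      refine ⟨(fun j => ((b j : ℝ))), ?_, ?_⟩
      · exact subset_convexHull ℝ _ (Set.mem_image_of_mem _ (by exact_mod_cast hb))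
      · show (∑ i, (d i : ℝ) * ((fun j => ((b j : ℝ))) i)) = _
        rw [dot_cast d b]
        exact_mod_cast congrArg (fun z : ℤ => (z : ℝ)) hbe.symm
    · rintro y ⟨p, hp, rfl⟩
      have hsub : ((fun v : Fin 3 → ℤ => fun i => (v i : ℝ)) '' (V : Set (Fin 3 → ℤ))) ⊆
          {x | f x ≤ ((S : ℤ) : ℝ)} := by
        rintro x ⟨v, hv, rfl⟩
        have : dotf d v ≤ S := Finset.le_sup' _ (by exact_mod_cast hv)
        simp only [Set.mem_setOf_eq, hf]
        rw [dot_cast d v]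
        exact_mod_cast this
      exact convexHull_min hsub (convex_halfSpace_le (linmap d) _) hp
  have hle : IsLeast (f '' latticePoly3 V) ((I : ℤ) : ℝ) := by
    constructor
    · obtain ⟨b, hb, hbe⟩ := Finset.exists_mem_eq_inf' hV (dotf d)
      refine ⟨(fun j => ((b j : ℝ))), ?_, ?_⟩
      · exact subset_convexHull ℝ _ (Set.mem_image_of_mem _ (by exact_mod_cast hb))
      · show (∑ i, (d i : ℝ) * ((fun j => ((b j : ℝ))) i)) = _
        rw [dot_cast d b]
        exact_mod_cast congrArg (fun z : ℤ => (z : ℝ)) hbe.symm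
    · rintro y ⟨p, hp, rfl⟩
      have hsub : ((fun v : Fin 3 → ℤ => fun i => (v i : ℝ)) '' (V : Set (Fin 3 → ℤ))) ⊆
          {x | ((I : ℤ) : ℝ) ≤ f x} := by
        rintro x ⟨v, hv, rfl⟩
        have : I ≤ dotf d v := Finset.inf'_le _ (by exact_mod_cast hv)
        simp only [Set.mem_setOf_eq, hf]
        rw [dot_cast d v]
        exact_mod_cast this
      exact convexHull_min hsub (convex_halfSpace_ge (linmap d) _) hp
  unfold width3
  rw [hgr.csSup_eq, hle.csInf_eq]
  unfold NN
  push_cast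
  ring


lemma certv (k α β γ a b c : ℤ) (hk : 0 ≤ k) :
    k * NN V hV ![α, β, γ] ≤ NN V hV ![a, b, c] +
      (|k * α - a| * NN V hV ![1,0,0] +
       (|k * β - b| * NN V hV ![0,1,0] + |k * γ - c| * NN V hV ![0,0,1])) := by
  apply cert V hV k hk _ _ (k*α - a) (k*β - b) (k*γ - c)
  funext i
  fin_cases i <;>
    simp [Pi.add_apply, Pi.smul_apply, smul_eq_mul] <;> ring

lemma certtwo (k α β γ a b c a' b' c' : ℤ) (hk : 0 ≤ k)
    (h0 : k * α = a + a') (h1 : k * β = b + b') (h2 : k * γ = c + c') :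
    k * NN V hV ![α, β, γ] ≤ NN V hV ![a, b, c] + NN V hV ![a', b', c'] := by
  apply cert2 V hV k hk
  funext i
  fin_cases i <;> simp [Pi.add_apply, Pi.smul_apply, smul_eq_mul] <;> omega

lemma NN_flip (x y z : ℤ) : NN V hV ![-x, -y, -z] = NN V hV ![x, y, z] := by
  rw [show ![-x, -y, -z] = -![x, y, z] from by funext i; fin_cases i <;> simp]
  exact NN_neg V hV _

lemma NN_axis1 (p : ℤ) : NN V hV ![p, 0, 0] = |p| * NN V hV ![1, 0, 0] := by
  rw [show ![p, (0:ℤ), 0] = p • ![1, 0, 0] from by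
    funext i; fin_cases i <;> simp [Pi.smul_apply, smul_eq_mul]]
  exact NN_smul_abs V hV p _

lemma NN_axis2 (p : ℤ) : NN V hV ![0, p, 0] = |p| * NN V hV ![0, 1, 0] := by
  rw [show ![(0:ℤ), p, 0] = p • ![0, 1, 0] from by
    funext i; fin_cases i <;> simp [Pi.smul_apply, smul_eq_mul]]
  exact NN_smul_abs V hV p _


section Core

variable {l₁ l₂ l Mz : ℤ}

/-- Helper: sign decomposition of a nonzero integer. -/
lemma sign_decomp (a : ℤ) (h : a ≠ 0) : ∃ s : ℤ, (s = 1 ∨ s = -1) ∧ a = s * |a| := by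
  rcases le_or_gt 0 a with ha | ha
  · exact ⟨1, Or.inl rfl, by rw [abs_of_nonneg ha, one_mul]⟩
  · exact ⟨-1, Or.inr rfl, by rw [abs_of_neg ha]; ring⟩

lemma diag_ge (hd1 : l₂ ≤ NN V hV ![1, 1, 0]) (hd2 : l₂ ≤ NN V hV ![1, -1, 0])
    (s₁ s₂ : ℤ) (h1 : s₁ = 1 ∨ s₁ = -1) (h2 : s₂ = 1 ∨ s₂ = -1) :
    l₂ ≤ NN V hV ![s₁, s₂, 0] := by
  rcases h1 with rfl | rfl <;> rcases h2 with rfl | rfl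
  · exact hd1
  · exact hd2
  · rw [show ((-1 : ℤ)) = -1 from rfl]
    calc l₂ ≤ NN V hV ![1, -1, 0] := hd2
      _ = NN V hV ![-1, 1, 0] := by
          rw [← NN_flip V hV 1 (-1) 0]; norm_num
  · calc l₂ ≤ NN V hV ![1, 1, 0] := hd1
      _ = NN V hV ![-1, -1, 0] := by
          rw [← NN_flip V hV 1 1 0]; norm_num

/-- The core combinatorial lemma: every primitive direction has width at least
`min l₁ Mz`. -/
lemma core (h12 : l₁ ≤ l₂) (h2l : l₂ ≤ l)
    (hl1 : NN V hV ![1, 0, 0] = l₁) (hl2 : NN V hV ![0, 1, 0] = l₂)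
    (hl3 : NN V hV ![0, 0, 1] = l)
    (hd1 : l₂ ≤ NN V hV ![1, 1, 0]) (hd2 : l₂ ≤ NN V hV ![1, -1, 0])
    (hall : ∀ α β : ℤ, l ≤ NN V hV ![α, β, 1])
    (hM : ∀ a b : ℤ, |a| = 1 → |b| = 1 → Mz ≤ NN V hV ![a, b, 2])
    (a b c : ℤ) (hg : Int.gcd a (Int.gcd b c) = 1) (hc : 0 ≤ c) :
    min l₁ Mz ≤ NN V hV ![a, b, c] := by
  have h1nn : 0 ≤ l₁ := hl1 ▸ NN_nonneg V hV _
  have hminl : min l₁ Mz ≤ l₁ := min_le_left _ _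
  have h2nn : 0 ≤ l₂ := le_trans h1nn h12
  have hlnn : 0 ≤ l := le_trans h2nn h2l
  rcases eq_or_lt_of_le hc with hc0 | hc1
  · -- c = 0
    obtain rfl : c = 0 := hc0.symm
    by_cases ha0 : a = 0
    · subst ha0
      by_cases hb0 : b = 0
      · subst hb0; simp [Int.gcd] at hg
      · have h := NN_axis2 V hV b
        have hb1 : 1 ≤ |b| := by rcases abs_cases b with ⟨h1, h2⟩ | ⟨h1, h2⟩ <;> omega
        have hBl : l₂ ≤ NN V hV ![0, b, 0] := by
          rw [h, hl2]
          have := mul_le_mul_of_nonneg_right hb1 h2nn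
          linarith
        linarith
    · by_cases hb0 : b = 0
      · subst hb0
        have h := NN_axis1 V hV a
        have ha1 : 1 ≤ |a| := by rcases abs_cases a with ⟨h1, h2⟩ | ⟨h1, h2⟩ <;> omega
        have hAl : l₁ ≤ NN V hV ![a, 0, 0] := by
          rw [h, hl1]
          have := mul_le_mul_of_nonneg_right ha1 h1nn
          linarith
        linarith
      · obtain ⟨σ₁, hσ₁, hA⟩ := sign_decomp a ha0
        obtain ⟨σ₂, hσ₂, hB⟩ := sign_decomp b hb0
        set A := |a| with hA' 
        set B := |b| with hB'
        have hA1 : 1 ≤ A := by rw [hA']; rcases abs_cases a with ⟨h1, h2⟩ | ⟨h1, h2⟩ <;> omega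
        have hB1 : 1 ≤ B := by rw [hB']; rcases abs_cases b with ⟨h1, h2⟩ | ⟨h1, h2⟩ <;> omega
        have hσv := diag_ge V hV hd1 hd2 σ₁ σ₂ hσ₁ hσ₂
        rcases le_total B A with hBA | hAB
        · have hcert := certv V hV A σ₁ σ₂ 0 a b 0 (by omega)
          have e1 : abs (A * σ₁ - a) = 0 := by
            rcases hσ₁ with rfl | rfl <;>
              [rw [show A * 1 - a = 0 by omega, abs_zero];
               rw [show A * (-1) - a = 0 by omega, abs_zero]]
          have e2 : abs (A * σ₂ - b) = A - B := by
            rcases hσ₂ with rfl | rfl <;>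
              [rw [show A * 1 - b = A - B by omega, abs_of_nonneg (by omega : (0:ℤ) ≤ A - B)];
               rw [show A * (-1) - b = -(A - B) by omega, abs_neg,
                 abs_of_nonneg (by omega : (0:ℤ) ≤ A - B)]]
          have e3 : abs (A * 0 - 0 : ℤ) = (0 : ℤ) := by norm_num
          rw [e1, e2, e3, hl1, hl2, hl3] at hcert
          have hml : A * l₂ ≤ A * NN V hV ![σ₁, σ₂, 0] :=
            mul_le_mul_of_nonneg_left hσv (by omega)
          have hb2 : 0 ≤ (B - 1) * l₂ := mul_nonneg (by omega) h2nn
          nlinarith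
        · have hcert := certv V hV B σ₁ σ₂ 0 a b 0 (by omega)
          have e1 : abs (B * σ₁ - a) = B - A := by
            rcases hσ₁ with rfl | rfl <;>
              [rw [show B * 1 - a = B - A by omega, abs_of_nonneg (by omega : (0:ℤ) ≤ B - A)];
               rw [show B * (-1) - a = -(B - A) by omega, abs_neg,
                 abs_of_nonneg (by omega : (0:ℤ) ≤ B - A)]]
          have e2 : abs (B * σ₂ - b) = 0 := by
            rcases hσ₂ with rfl | rfl <;>
              [rw [show B * 1 - b = 0 by omega, abs_zero];
               rw [show B * (-1) - b = 0 by omega, abs_zero]]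
          have e3 : abs (B * 0 - 0 : ℤ) = (0 : ℤ) := by norm_num
          rw [e1, e2, e3, hl1, hl2, hl3] at hcert
          have hml : B * l₂ ≤ B * NN V hV ![σ₁, σ₂, 0] :=
            mul_le_mul_of_nonneg_left hσv (by omega)
          have h12' : (B - A) * l₁ ≤ (B - A) * l₂ :=
            mul_le_mul_of_nonneg_left h12 (by omega)
          have ha2 : 0 ≤ (A - 1) * l₂ := mul_nonneg (by omega) h2nn
          nlinarith
  · -- 1 ≤ c
    by_cases hc2 : c = 2
    · subst hc2
      rcases Int.even_or_odd a with ⟨α2, ha2⟩ | ⟨α2, ha2⟩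
      · -- a even (then b may be anything)
        rcases Int.even_or_odd b with ⟨β2, hb2⟩ | ⟨β2, hb2⟩
        · -- both even: impossible by gcd, but we do not even need it... b even:
          have hcert := certv V hV 2 α2 β2 1 a b 2 (by norm_num)
          have e1 : abs (2 * α2 - a) = 0 := by rw [show 2 * α2 - a = 0 by omega, abs_zero]
          have e2 : abs (2 * β2 - b) = 0 := by rw [show 2 * β2 - b = 0 by omega, abs_zero]
          have e3 : abs (2 * 1 - 2 : ℤ) = 0 := by norm_num
          rw [e1, e2, e3, hl1, hl2, hl3] at hcert
          have h := hall α2 β2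
          linarith
        · have hcert := certv V hV 2 α2 β2 1 a b 2 (by norm_num)
          have e1 : abs (2 * α2 - a) = 0 := by rw [show 2 * α2 - a = 0 by omega, abs_zero]
          have e2 : abs (2 * β2 - b) = 1 := by rw [show 2 * β2 - b = -1 by omega]; norm_num
          have e3 : abs (2 * 1 - 2 : ℤ) = 0 := by norm_num
          rw [e1, e2, e3, hl1, hl2, hl3] at hcert
          have h := hall α2 β2
          linarith
      · rcases Int.even_or_odd b with ⟨β2, hb2⟩ | ⟨β2, hb2⟩
        · -- a odd, b even
          have hcert := certv V hV 2 α2 β2 1 a b 2 (by norm_num)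
          have e1 : abs (2 * α2 - a) = 1 := by rw [show 2 * α2 - a = -1 by omega]; norm_num
          have e2 : abs (2 * β2 - b) = 0 := by rw [show 2 * β2 - b = 0 by omega, abs_zero]
          have e3 : abs (2 * 1 - 2 : ℤ) = 0 := by norm_num
          rw [e1, e2, e3, hl1, hl2, hl3] at hcert
          have h := hall α2 β2
          linarith
        · -- both odd: the corner case
          obtain ⟨σ₁, hσ₁, hA⟩ := sign_decomp a (by omega)
          obtain ⟨σ₂, hσ₂, hB⟩ := sign_decomp b (by omega)
          set A := |a| with hA'
          set B := |b| with hB'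
          obtain ⟨tA, htA⟩ : ∃ t, A = 2 * t + 1 := by
            rw [hA']; rcases abs_cases a with ⟨h1, h2⟩ | ⟨h1, h2⟩
            exacts [⟨α2, by omega⟩, ⟨-α2 - 1, by omega⟩]
          obtain ⟨tB, htB⟩ : ∃ t, B = 2 * t + 1 := by
            rw [hB']; rcases abs_cases b with ⟨h1, h2⟩ | ⟨h1, h2⟩
            exacts [⟨β2, by omega⟩, ⟨-β2 - 1, by omega⟩]
          have hA0 : 0 ≤ A := hA' ▸ abs_nonneg a
          have hB0 : 0 ≤ B := hB' ▸ abs_nonneg b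
          have hA1 : 1 ≤ A := by omega
          have hB1 : 1 ≤ B := by omega
          by_cases hAone : A = 1
          · by_cases hBone : B = 1
            · -- the corner directions themselves
              exact le_trans (min_le_right _ _) (hM a b (by omega) (by omega))
            · have hB3 : 3 ≤ B := by omega
              have hcert := certv V hV B 0 σ₂ 1 a b 2 (by omega)
              have e1 : abs (B * 0 - a) = 1 := by
                rw [show B * 0 - a = -a by ring, abs_neg]; omega
              have e2 : abs (B * σ₂ - b) = 0 := by
                rcases hσ₂ with rfl | rfl <;>
                  [rw [show B * 1 - b = 0 by omega, abs_zero];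
                   rw [show B * (-1) - b = 0 by omega, abs_zero]]
              have e3 : abs (B * 1 - 2) = B - 2 := by
                rw [show B * 1 - 2 = B - 2 by ring, abs_of_nonneg (by omega : (0:ℤ) ≤ B - 2)]
              rw [e1, e2, e3, hl1, hl2, hl3] at hcert
              have h := hall 0 σ₂
              have hml : B * l ≤ B * NN V hV ![0, σ₂, 1] :=
                mul_le_mul_of_nonneg_left h (by omega)
              -- NNf ≥ B*l - l₁ - (B-2)*l = 2l - l₁ ≥ l₁
              linarith
          · have hA3 : 3 ≤ A := by omega
            by_cases hBone : B = 1
            · have hcert := certv V hV A σ₁ 0 1 a b 2 (by omega)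
              have e1 : abs (A * σ₁ - a) = 0 := by
                rcases hσ₁ with rfl | rfl <;>
                  [rw [show A * 1 - a = 0 by omega, abs_zero];
                   rw [show A * (-1) - a = 0 by omega, abs_zero]]
              have e2 : abs (A * 0 - b) = 1 := by
                rw [show A * 0 - b = -b by ring, abs_neg]; omega
              have e3 : abs (A * 1 - 2) = A - 2 := by
                rw [show A * 1 - 2 = A - 2 by ring, abs_of_nonneg (by omega : (0:ℤ) ≤ A - 2)]
              rw [e1, e2, e3, hl1, hl2, hl3] at hcert
              have h := hall σ₁ 0
              have hml : A * l ≤ A * NN V hV ![σ₁, 0, 1] :=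
                mul_le_mul_of_nonneg_left h (by omega)
              linarith
            · have hB3 : 3 ≤ B := by omega
              -- Step 1: the diagonal ![σ₁,σ₂,0] is long: ≥ 2l - NNf
              obtain ⟨t₁, ht₁⟩ : ∃ t, 2 * t = a - σ₁ := by
                rcases hσ₁ with rfl | rfl; exacts [⟨α2, by omega⟩, ⟨α2 + 1, by omega⟩]
              obtain ⟨t₂, ht₂⟩ : ∃ t, 2 * t = b - σ₂ := by
                rcases hσ₂ with rfl | rfl; exacts [⟨β2, by omega⟩, ⟨β2 + 1, by omega⟩]
              have hstep1 := certtwo V hV 2 t₁ t₂ 1 a b 2 (-σ₁) (-σ₂) 0 (by norm_num)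
                (by omega) (by omega) (by norm_num)
              have hflip : NN V hV ![-σ₁, -σ₂, 0] = NN V hV ![σ₁, σ₂, 0] := by
                rw [← NN_flip V hV σ₁ σ₂ 0]; norm_num
              rw [hflip] at hstep1
              have hdiag : 2 * l - NN V hV ![a, b, 2] ≤ NN V hV ![σ₁, σ₂, 0] := by
                have := hall t₁ t₂; linarith
              rcases le_total B A with hBA | hAB
              · have hcert := certv V hV A σ₁ σ₂ 0 a b 2 (by omega)
                have e1 : abs (A * σ₁ - a) = 0 := by
                  rcases hσ₁ with rfl | rfl <;>
                    [rw [show A * 1 - a = 0 by omega, abs_zero];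
                     rw [show A * (-1) - a = 0 by omega, abs_zero]]
                have e2 : abs (A * σ₂ - b) = A - B := by
                  rcases hσ₂ with rfl | rfl <;>
                    [rw [show A * 1 - b = A - B by omega,
                       abs_of_nonneg (by omega : (0:ℤ) ≤ A - B)];
                     rw [show A * (-1) - b = -(A - B) by omega, abs_neg,
                       abs_of_nonneg (by omega : (0:ℤ) ≤ A - B)]]
                have e3 : abs (A * 0 - 2) = 2 := by norm_num
                rw [e1, e2, e3, hl1, hl2, hl3] at hcert
                have hml : A * (2 * l - NN V hV ![a, b, 2]) ≤ A * NN V hV ![σ₁, σ₂, 0] :=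
                  mul_le_mul_of_nonneg_left hdiag (by omega)
                have k2 : 2 * (A - 1) * l₂ ≤ 2 * (A - 1) * l :=
                  mul_le_mul_of_nonneg_left h2l (by omega)
                have k3 : 0 ≤ (B - 3) * l₂ := mul_nonneg (by omega) h2nn
                have k1 : (A + 1) * l₂ ≤ (A + 1) * NN V hV ![a, b, 2] := by
                  linarith [hml, hcert, k2, k3]
                have : l₂ ≤ NN V hV ![a, b, 2] := le_of_mul_le_mul_left k1 (by omega)
                linarith
              · have hcert := certv V hV B σ₁ σ₂ 0 a b 2 (by omega)
                have e1 : abs (B * σ₁ - a) = B - A := by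
                  rcases hσ₁ with rfl | rfl <;>
                    [rw [show B * 1 - a = B - A by omega,
                       abs_of_nonneg (by omega : (0:ℤ) ≤ B - A)];
                     rw [show B * (-1) - a = -(B - A) by omega, abs_neg,
                       abs_of_nonneg (by omega : (0:ℤ) ≤ B - A)]]
                have e2 : abs (B * σ₂ - b) = 0 := by
                  rcases hσ₂ with rfl | rfl <;>
                    [rw [show B * 1 - b = 0 by omega, abs_zero];
                     rw [show B * (-1) - b = 0 by omega, abs_zero]]
                have e3 : abs (B * 0 - 2) = 2 := by norm_num
                rw [e1, e2, e3, hl1, hl2, hl3] at hcert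
                have hml : B * (2 * l - NN V hV ![a, b, 2]) ≤ B * NN V hV ![σ₁, σ₂, 0] :=
                  mul_le_mul_of_nonneg_left hdiag (by omega)
                have k2 : 2 * (B - 1) * l₁ ≤ 2 * (B - 1) * l :=
                  mul_le_mul_of_nonneg_left (le_trans h12 h2l) (by omega)
                have k2' : (B - A) * l₁ ≤ (B - A) * l₁ := le_refl _
                have k3 : 0 ≤ (A - 3) * l₁ := mul_nonneg (by omega) h1nn
                have k1 : (B + 1) * l₁ ≤ (B + 1) * NN V hV ![a, b, 2] := by
                  linarith [hml, hcert, k2, k3]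
                have : l₁ ≤ NN V hV ![a, b, 2] := le_of_mul_le_mul_left k1 (by omega)
                linarith
    · -- c ≥ 1, c ≠ 2 : balanced-residue hall certificate
      obtain ⟨α, p, hpe, hplo, hphi⟩ : ∃ α p : ℤ, c * α = a + p ∧ c / 2 - c < p ∧ p ≤ c / 2 := by
        refine ⟨(a + c / 2) / c, c / 2 - (a + c / 2) % c, ?_, ?_, ?_⟩
        · have h := Int.mul_ediv_add_emod (a + c / 2) c; omega
        · have h1 : 0 ≤ (a + c / 2) % c := Int.emod_nonneg _ (by omega)
          have h2 : (a + c / 2) % c < c := Int.emod_lt_of_pos _ (by omega)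
          omega
        · have h1 : 0 ≤ (a + c / 2) % c := Int.emod_nonneg _ (by omega)
          omega
      obtain ⟨β, q, hqe, hqlo, hqhi⟩ : ∃ β q : ℤ, c * β = b + q ∧ c / 2 - c < q ∧ q ≤ c / 2 := by
        refine ⟨(b + c / 2) / c, c / 2 - (b + c / 2) % c, ?_, ?_, ?_⟩
        · have h := Int.mul_ediv_add_emod (b + c / 2) c; omega
        · have h1 : 0 ≤ (b + c / 2) % c := Int.emod_nonneg _ (by omega)
          have h2 : (b + c / 2) % c < c := Int.emod_lt_of_pos _ (by omega)
          omega
        · have h1 : 0 ≤ (b + c / 2) % c := Int.emod_nonneg _ (by omega)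
          omega
      have hcert := certv V hV c α β 1 a b c (by omega)
      have e1 : abs (c * α - a) = |p| := by rw [show c * α - a = p by omega]
      have e2 : abs (c * β - b) = |q| := by rw [show c * β - b = q by omega]
      have e3 : abs (c * 1 - c) = 0 := by rw [show c * 1 - c = 0 by ring, abs_zero]
      rw [e1, e2, e3, hl1, hl2, hl3] at hcert
      have hml : c * l ≤ c * NN V hV ![α, β, 1] :=
        mul_le_mul_of_nonneg_left (hall α β) (by omega)
      have hpabs : |p| ≤ c / 2 := by rcases abs_cases p with ⟨h1, h2⟩ | ⟨h1, h2⟩ <;> omega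
      have hqabs : |q| ≤ c / 2 := by rcases abs_cases q with ⟨h1, h2⟩ | ⟨h1, h2⟩ <;> omega
      rcases Int.even_or_odd c with ⟨j, hj⟩ | ⟨j, hj⟩
      · -- c = 2 j, j ≥ 2 since c ≠ 2 and c ≥ 1
        have hj2 : 2 ≤ j := by omega
        have hdj : c / 2 = j := by omega
        have hex : ¬(|p| = j ∧ |q| = j) := by
          rintro ⟨hp1, hq1⟩
          have hja : (j : ℤ) ∣ a := by
            rcases abs_cases p with ⟨h1, h2⟩ | ⟨h1, h2⟩
            · refine ⟨2 * α - 1, ?_⟩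
              have hp2 : p = j := by omega
              rw [hj] at hpe; linarith
            · refine ⟨2 * α + 1, ?_⟩
              have hp2 : p = -j := by omega
              rw [hj] at hpe; linarith
          have hjb : (j : ℤ) ∣ b := by
            rcases abs_cases q with ⟨h1, h2⟩ | ⟨h1, h2⟩
            · refine ⟨2 * β - 1, ?_⟩
              have hq2 : q = j := by omega
              rw [hj] at hqe; linarith
            · refine ⟨2 * β + 1, ?_⟩
              have hq2 : q = -j := by omega
              rw [hj] at hqe; linarith
          have hjc : (j : ℤ) ∣ c := ⟨2, by omega⟩
          have hd : (j : ℤ) ∣ ((Int.gcd a (Int.gcd b c) : ℕ) : ℤ) :=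
            Int.dvd_coe_gcd hja (Int.dvd_coe_gcd hjb hjc)
          rw [hg] at hd
          have := Int.le_of_dvd one_pos hd
          omega
        have hple : |p| ≤ j := by omega
        have hqle : |q| ≤ j := by omega
        subst hj
        rcases (by omega : |p| ≤ j - 1 ∨ |q| ≤ j - 1) with hcase | hcase
        · have k1 : |p| * l₁ ≤ (j - 1) * l := by
            apply mul_le_mul hcase (le_trans h12 h2l) h1nn (by omega)
          have k2 : |q| * l₂ ≤ j * l := by
            apply mul_le_mul hqle h2l h2nn (by omega)
          have : l ≤ NN V hV ![a, b, j + j] := by linarith [hcert, hml, k1, k2]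
          linarith
        · have k1 : |p| * l₁ ≤ j * l := by
            apply mul_le_mul hple (le_trans h12 h2l) h1nn (by omega)
          have k2 : |q| * l₂ ≤ (j - 1) * l := by
            apply mul_le_mul hcase h2l h2nn (by omega)
          have : l ≤ NN V hV ![a, b, j + j] := by linarith [hcert, hml, k1, k2]
          linarith
      · -- c = 2 j + 1 odd
        have hdj : c / 2 = j := by omega
        have hj0 : 0 ≤ j := by omega
        subst hj
        have k1 : |p| * l₁ ≤ j * l := by
          apply mul_le_mul (by omega) (le_trans h12 h2l) h1nn hj0
        have k2 : |q| * l₂ ≤ j * l := by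
          apply mul_le_mul (by omega) h2l h2nn hj0
        have : l ≤ NN V hV ![a, b, 2 * j + 1] := by linarith [hcert, hml, k1, k2]
        linarith

/-- `core` without the sign restriction on `c`. -/
lemma core' (h12 : l₁ ≤ l₂) (h2l : l₂ ≤ l)
    (hl1 : NN V hV ![1, 0, 0] = l₁) (hl2 : NN V hV ![0, 1, 0] = l₂)
    (hl3 : NN V hV ![0, 0, 1] = l)
    (hd1 : l₂ ≤ NN V hV ![1, 1, 0]) (hd2 : l₂ ≤ NN V hV ![1, -1, 0])
    (hall : ∀ α β : ℤ, l ≤ NN V hV ![α, β, 1])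
    (hM : ∀ a b : ℤ, |a| = 1 → |b| = 1 → Mz ≤ NN V hV ![a, b, 2])
    (a b c : ℤ) (hg : Int.gcd a (Int.gcd b c) = 1) :
    min l₁ Mz ≤ NN V hV ![a, b, c] := by
  rcases le_or_gt 0 c with hc | hc
  · exact core V hV h12 h2l hl1 hl2 hl3 hd1 hd2 hall hM a b c hg hc
  · have hflip := NN_flip V hV a b c
    have hg' : Int.gcd (-a) (Int.gcd (-b) (-c)) = 1 := by
      simpa [Int.gcd, Int.natAbs_neg] using hg
    have h := core V hV h12 h2l hl1 hl2 hl3 hd1 hd2 hall hM (-a) (-b) (-c) hg' (by omega)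
    rw [hflip] at h
    exact h

end Core

end LW3Aux

/-- Corollary: with `Δ_P(x) = l₁ ≤ Δ_P(y) = l₂ ≤ Δ_P(z) = l`, `Δ_P(x±y) ≥ l₂`, and
`Δ_P(ax + by + z) ≥ l` for all integers `a, b`, the lattice width of `P` equals
`min(l₁, m)`, where `m` is the minimum of `w_{(a,b,c)}(P)` over all `(a,b,c) ∈ ℤ³`
with `|a| = |b| = 1` and `|c| = 2`. -/
theorem latticeWidth3_eq (V : Finset (Fin 3 → ℤ)) (hV : V.Nonempty)
    (P : Set (Fin 3 → ℝ)) (hP : P = latticePoly3 V) (l₁ l₂ l : ℤ)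
    (h12 : l₁ ≤ l₂) (h2l : l₂ ≤ l)
    (hx : width3 P ![1, 0, 0] = (l₁ : ℝ)) (hy : width3 P ![0, 1, 0] = (l₂ : ℝ))
    (hz : width3 P ![0, 0, 1] = (l : ℝ))
    (hp : (l₂ : ℝ) ≤ width3 P ![1, 1, 0]) (hm : (l₂ : ℝ) ≤ width3 P ![1, -1, 0])
    (hall : ∀ a b : ℤ, (l : ℝ) ≤ width3 P ![a, b, 1])
    (m : ℝ)
    (hmE : IsLeast
      {w : ℝ | ∃ a b c : ℤ, |a| = 1 ∧ |b| = 1 ∧ |c| = 2 ∧ width3 P ![a, b, c] = w} m) :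
    IsLeast (widthSet3 P) (min (l₁ : ℝ) m) := by
  subst hP
  have hb := LW3Aux.bridge V hV
  obtain ⟨⟨a₀, b₀, c₀, ha₀, hb₀, hc₀, hw₀⟩, hlb⟩ := hmE
  set Mz : ℤ := LW3Aux.NN V hV ![a₀, b₀, c₀] with hMzdef
  have hMz : (Mz : ℝ) = m := by rw [hMzdef, ← hb ![a₀, b₀, c₀], hw₀]
  -- integer versions of all hypotheses
  have hl1 : LW3Aux.NN V hV ![1, 0, 0] = l₁ := by
    have := hb ![1, 0, 0]; rw [hx] at this; exact_mod_cast this.symm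
  have hl2 : LW3Aux.NN V hV ![0, 1, 0] = l₂ := by
    have := hb ![0, 1, 0]; rw [hy] at this; exact_mod_cast this.symm
  have hl3 : LW3Aux.NN V hV ![0, 0, 1] = l := by
    have := hb ![0, 0, 1]; rw [hz] at this; exact_mod_cast this.symm
  have hd1 : l₂ ≤ LW3Aux.NN V hV ![1, 1, 0] := by
    have := hb ![1, 1, 0]; rw [this] at hp; exact_mod_cast hp
  have hd2 : l₂ ≤ LW3Aux.NN V hV ![1, -1, 0] := by
    have := hb ![1, -1, 0]; rw [this] at hm; exact_mod_cast hm
  have hallZ : ∀ α β : ℤ, l ≤ LW3Aux.NN V hV ![α, β, 1] := by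
    intro α β
    have h := hall α β; rw [hb ![α, β, 1]] at h; exact_mod_cast h
  have hMcorner : ∀ a b : ℤ, |a| = 1 → |b| = 1 → Mz ≤ LW3Aux.NN V hV ![a, b, 2] := by
    intro a b ha hb1
    have hmem : width3 (latticePoly3 V) ![a, b, 2] ∈
        {w : ℝ | ∃ a b c : ℤ, |a| = 1 ∧ |b| = 1 ∧ |c| = 2 ∧
          width3 (latticePoly3 V) ![a, b, c] = w} :=
      ⟨a, b, 2, ha, hb1, by norm_num, rfl⟩
    have h := hlb hmem
    rw [hb ![a, b, 2], ← hMz] at h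
    exact_mod_cast h
  have hminR : min (l₁ : ℝ) m = ((min l₁ Mz : ℤ) : ℝ) := by
    rw [← hMz]; push_cast; ring
  constructor
  · -- membership
    rcases le_total (l₁ : ℝ) m with hcase | hcase
    · refine ⟨![1, 0, 0], ?_, ?_⟩
      · simp [Int.gcd]
      · rw [hx, min_eq_left hcase]
    · refine ⟨![a₀, b₀, c₀], ?_, ?_⟩
      · rw [Int.abs_eq_natAbs] at ha₀ hb₀ hc₀
        have h1 : a₀.natAbs = 1 := by exact_mod_cast ha₀
        have h2 : b₀.natAbs = 1 := by exact_mod_cast hb₀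
        have h3 : c₀.natAbs = 2 := by exact_mod_cast hc₀
        simp [Int.gcd, h1, h2, h3]
      · rw [hw₀, min_eq_right hcase]
  · -- lower bound
    rintro w ⟨d, hdg, rfl⟩
    rw [hb d, hminR]
    have hd3 : ![d 0, d 1, d 2] = d := by
      funext i; fin_cases i <;> rfl
    have h := LW3Aux.core' V hV h12 h2l hl1 hl2 hl3 hd1 hd2 hallZ hMcorner
      (d 0) (d 1) (d 2) hdg
    rw [hd3] at h
    exact_mod_cast h
end

section
/- Let P ⊂ ℝ³ be a lattice polytope. Then: (1) there exists an affine unimodular transformation T of ℝ³ such that T(P) ⊆ [0, w(P)] × [0, w₂(P)] × [0, ls_□(P)]; and (2) for any integers a ≤ b ≤ c such that T(P) ⊆ [0,a] × [0,b] × [0,c] for some affine unimodular transformation T, one has w(P) ≤ a, w₂(P) ≤ b and ls_□(P) ≤ c. -/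
/-- `T(P) ⊆ [0,a] × [0,b] × [0,c]` for some affine unimodular `T : p ↦ A·p + v`. -/
def FitsInBox3 (P : Set (Fin 3 → ℝ)) (a b c : ℤ) : Prop :=
  ∃ (A : Matrix (Fin 3) (Fin 3) ℤ) (v : Fin 3 → ℤ),
    (A.det = 1 ∨ A.det = -1) ∧
    ∀ p ∈ P, ((A.map (fun z : ℤ => (z : ℝ))).mulVec p + fun j => (v j : ℝ)) 0 ∈
        Set.Icc (0 : ℝ) (a : ℝ) ∧
      ((A.map (fun z : ℤ => (z : ℝ))).mulVec p + fun j => (v j : ℝ)) 1 ∈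
        Set.Icc (0 : ℝ) (b : ℝ) ∧
      ((A.map (fun z : ℤ => (z : ℝ))).mulVec p + fun j => (v j : ℝ)) 2 ∈
        Set.Icc (0 : ℝ) (c : ℝ)

/-- `T(P) ⊆ [0,k] × [0,k] × ℝ` for some affine unimodular `T : p ↦ A·p + v`. -/
def FitsInSlab3 (P : Set (Fin 3 → ℝ)) (k : ℤ) : Prop :=
  ∃ (A : Matrix (Fin 3) (Fin 3) ℤ) (v : Fin 3 → ℤ),
    (A.det = 1 ∨ A.det = -1) ∧
    ∀ p ∈ P, ((A.map (fun z : ℤ => (z : ℝ))).mulVec p + fun j => (v j : ℝ)) 0 ∈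
        Set.Icc (0 : ℝ) (k : ℝ) ∧
      ((A.map (fun z : ℤ => (z : ℝ))).mulVec p + fun j => (v j : ℝ)) 1 ∈
        Set.Icc (0 : ℝ) (k : ℝ)

abbrev V3 := Fin 3 → ℤ

def dot3 (a b : V3) : ℤ := a 0 * b 0 + a 1 * b 1 + a 2 * b 2

def cross3 (a b : V3) : V3 := ![a 1 * b 2 - a 2 * b 1, a 2 * b 0 - a 0 * b 2, a 0 * b 1 - a 1 * b 0]

@[simp] lemma cross3_0 (a b : V3) : cross3 a b 0 = a 1 * b 2 - a 2 * b 1 := rfl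
@[simp] lemma cross3_1 (a b : V3) : cross3 a b 1 = a 2 * b 0 - a 0 * b 2 := rfl
@[simp] lemma cross3_2 (a b : V3) : cross3 a b 2 = a 0 * b 1 - a 1 * b 0 := rfl

@[simp] lemma smul_apply3 (k : ℤ) (a : V3) (i : Fin 3) : (k • a) i = k * a i := rfl
@[simp] lemma add_apply3 (a b : V3) (i : Fin 3) : (a + b) i = a i + b i := rfl
@[simp] lemma sub_apply3 (a b : V3) (i : Fin 3) : (a - b) i = a i - b i := rfl
@[simp] lemma neg_apply3 (a : V3) (i : Fin 3) : (-a) i = -(a i) := rfl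

def gcd3 (a : V3) : ℕ := Int.gcd (a 0) (Int.gcd (a 1) (a 2))

lemma det_rows (A : Matrix (Fin 3) (Fin 3) ℤ) : A.det = dot3 (cross3 (A 0) (A 1)) (A 2) := by
  rw [Matrix.det_fin_three]; simp [dot3]; ring

lemma dot3_comm (a b : V3) : dot3 a b = dot3 b a := by simp [dot3]; ring

lemma dot3_cyc (a b c : V3) : dot3 (cross3 a b) c = dot3 (cross3 b c) a := by simp [dot3]; ring

lemma triple_id (φ a s : V3) : cross3 φ (cross3 a s) = dot3 φ s • a - dot3 φ a • s := by
  funext i; fin_cases i <;> simp [dot3] <;> ring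

lemma cramer3 (r0 r1 r2 m : V3) :
    dot3 (cross3 r1 r2) m • r0 + dot3 (cross3 r2 r0) m • r1 + dot3 (cross3 r0 r1) m • r2
      = dot3 (cross3 r0 r1) r2 • m := by
  funext i; fin_cases i <;> simp [dot3] <;> ring

lemma cross3_smul_right (a : V3) (k : ℤ) (b : V3) : cross3 a (k • b) = k • cross3 a b := by
  funext i; fin_cases i <;> simp <;> ring

lemma cross3_add_right (a b c : V3) : cross3 a (b + c) = cross3 a b + cross3 a c := by
  funext i; fin_cases i <;> simp <;> ring

lemma cross3_self (a : V3) : cross3 a a = 0 := by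
  funext i; fin_cases i <;> simp <;> ring

lemma cross3_smul_smul (a b : V3) (c d : ℤ) : cross3 (c • a) (d • b) = (c * d) • cross3 a b := by
  funext i; fin_cases i <;> simp <;> ring

lemma dot3_zero_left (a : V3) : dot3 0 a = 0 := by simp [dot3]

lemma dot3_cross_left (a b : V3) : dot3 (cross3 a b) a = 0 := by simp [dot3]; ring
lemma dot3_cross_right (a b : V3) : dot3 (cross3 a b) b = 0 := by simp [dot3]; ring

lemma dot3_add_right (a b c : V3) : dot3 a (b + c) = dot3 a b + dot3 a c := by simp [dot3]; ring
lemma dot3_smul_right (a : V3) (k : ℤ) (b : V3) : dot3 a (k • b) = k * dot3 a b := by simp [dot3]; ring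
lemma dot3_sub_right (a b c : V3) : dot3 a (b - c) = dot3 a b - dot3 a c := by simp [dot3]; ring
lemma dot3_neg_right (a b : V3) : dot3 a (-b) = -dot3 a b := by simp [dot3]; ring

-- Bezout dual
lemma exists_dual (a : V3) (h : gcd3 a = 1) : ∃ φ : V3, dot3 a φ = 1 := by
  refine ⟨![Int.gcdA (a 0) (Int.gcd (a 1) (a 2)),
           Int.gcdB (a 0) (Int.gcd (a 1) (a 2)) * Int.gcdA (a 1) (a 2),
           Int.gcdB (a 0) (Int.gcd (a 1) (a 2)) * Int.gcdB (a 1) (a 2)], ?_⟩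
  have h1 := Int.gcd_eq_gcd_ab (a 1) (a 2)
  have h0 := Int.gcd_eq_gcd_ab (a 0) ((Int.gcd (a 1) (a 2) : ℤ))
  have hg : ((gcd3 a : ℕ) : ℤ) = 1 := by rw [h]; norm_num
  unfold gcd3 at hg
  simp [dot3]
  rw [← hg, h0]
  rw [h1]; ring

lemma gcd3_dvd (a : V3) (i : Fin 3) : ((gcd3 a : ℕ) : ℤ) ∣ a i := by
  have h0 : ((gcd3 a : ℕ) : ℤ) ∣ a 0 := Int.gcd_dvd_left _ _
  have hg : ((gcd3 a : ℕ) : ℤ) ∣ ((Int.gcd (a 1) (a 2) : ℕ) : ℤ) := Int.gcd_dvd_right _ _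
  fin_cases i
  · exact h0
  · exact hg.trans (Int.gcd_dvd_left _ _)
  · exact hg.trans (Int.gcd_dvd_right _ _)

lemma dvd_gcd3 (a : V3) (c : ℤ) (h0 : c ∣ a 0) (h1 : c ∣ a 1) (h2 : c ∣ a 2) :
    c ∣ ((gcd3 a : ℕ) : ℤ) := Int.dvd_coe_gcd h0 (Int.dvd_coe_gcd h1 h2)

lemma gcd3_eq_zero_iff (a : V3) : gcd3 a = 0 ↔ a = 0 := by
  unfold gcd3
  rw [Int.gcd_eq_zero_iff]
  constructor
  · rintro ⟨h0, h12⟩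
    have h12' : Int.gcd (a 1) (a 2) = 0 := by exact_mod_cast h12
    rw [Int.gcd_eq_zero_iff] at h12'
    funext i; fin_cases i
    · exact h0
    · exact h12'.1
    · exact h12'.2
  · intro h; subst h
    constructor
    · rfl
    · norm_num [Int.gcd]
section W

def maxd (V : Finset V3) (hV : V.Nonempty) (a : V3) : ℤ := V.sup' hV (fun v => dot3 a v)
def mind (V : Finset V3) (hV : V.Nonempty) (a : V3) : ℤ := V.inf' hV (fun v => dot3 a v)
def wd (V : Finset V3) (hV : V.Nonempty) (a : V3) : ℤ := maxd V hV a - mind V hV a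

variable {V : Finset V3} (hV : V.Nonempty)

lemma dot3_le_maxd (a : V3) {v : V3} (hv : v ∈ V) : dot3 a v ≤ maxd V hV a :=
  Finset.le_sup' _ hv
lemma mind_le_dot3 (a : V3) {v : V3} (hv : v ∈ V) : mind V hV a ≤ dot3 a v :=
  Finset.inf'_le _ hv
lemma exists_maxd (a : V3) : ∃ v ∈ V, maxd V hV a = dot3 a v :=
  Finset.exists_mem_eq_sup' hV _
lemma exists_mind (a : V3) : ∃ v ∈ V, mind V hV a = dot3 a v :=
  Finset.exists_mem_eq_inf' hV _

lemma wd_nonneg (a : V3) : 0 ≤ wd V hV a := by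
  obtain ⟨v, hv⟩ := id hV
  have h1 := dot3_le_maxd hV a hv
  have h2 := mind_le_dot3 hV a hv
  unfold wd; omega

lemma dot3_diff_le_wd (a : V3) {v w : V3} (hv : v ∈ V) (hw : w ∈ V) :
    dot3 a v - dot3 a w ≤ wd V hV a := by
  have h1 := dot3_le_maxd hV a hv
  have h2 := mind_le_dot3 hV a hw
  unfold wd; omega

lemma dot3_comboL (c d e : ℤ) (x y z v : V3) :
    dot3 (c • x + d • y + e • z) v = c * dot3 x v + d * dot3 y v + e * dot3 z v := by
  simp [dot3]; ring

lemma wd_combo (c d e : ℤ) (x y z : V3) :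
    wd V hV (c • x + d • y + e • z) ≤ |c| * wd V hV x + |d| * wd V hV y + |e| * wd V hV z := by
  obtain ⟨v, hv, hveq⟩ := exists_maxd hV (c • x + d • y + e • z)
  obtain ⟨w, hw, hweq⟩ := exists_mind hV (c • x + d • y + e • z)
  have key : ∀ (k : ℤ) (s : V3), k * dot3 s v - k * dot3 s w ≤ |k| * wd V hV s := by
    intro k s
    have h1 : k * dot3 s v - k * dot3 s w = k * (dot3 s v - dot3 s w) := by ring
    rw [h1]
    calc k * (dot3 s v - dot3 s w) ≤ |k * (dot3 s v - dot3 s w)| := le_abs_self _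
      _ = |k| * |dot3 s v - dot3 s w| := abs_mul _ _
      _ ≤ |k| * wd V hV s := by
          apply mul_le_mul_of_nonneg_left _ (abs_nonneg k)
          rw [abs_sub_le_iff]
          exact ⟨dot3_diff_le_wd hV s hv hw, dot3_diff_le_wd hV s hw hv⟩
  have e1 := key c x
  have e2 := key d y
  have e3 := key e z
  have hgoal : wd V hV (c • x + d • y + e • z)
      = c * dot3 x v + d * dot3 y v + e * dot3 z v
        - (c * dot3 x w + d * dot3 y w + e * dot3 z w) := by
    unfold wd; rw [hveq, hweq, dot3_comboL, dot3_comboL]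
  rw [hgoal]
  omega

lemma maxd_smul_pos (a : V3) (k : ℤ) (hk : 0 < k) : maxd V hV (k • a) = k * maxd V hV a := by
  apply le_antisymm
  · apply Finset.sup'_le
    intro v hv
    have : dot3 (k • a) v = k * dot3 a v := by simp [dot3]; ring
    rw [this]
    exact mul_le_mul_of_nonneg_left (dot3_le_maxd hV a hv) hk.le
  · obtain ⟨v, hv, hveq⟩ := exists_maxd hV a
    rw [hveq]
    have : k * dot3 a v = dot3 (k • a) v := by simp [dot3]; ring
    rw [this]
    exact dot3_le_maxd hV _ hv

lemma mind_smul_pos (a : V3) (k : ℤ) (hk : 0 < k) : mind V hV (k • a) = k * mind V hV a := by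
  apply le_antisymm
  · obtain ⟨v, hv, hveq⟩ := exists_mind hV a
    rw [hveq]
    have : k * dot3 a v = dot3 (k • a) v := by simp [dot3]; ring
    rw [this]
    exact mind_le_dot3 hV _ hv
  · apply Finset.le_inf'
    intro v hv
    have : dot3 (k • a) v = k * dot3 a v := by simp [dot3]; ring
    rw [this]
    exact mul_le_mul_of_nonneg_left (mind_le_dot3 hV a hv) hk.le

lemma wd_smul_pos (a : V3) (k : ℤ) (hk : 0 < k) : wd V hV (k • a) = k * wd V hV a := by
  unfold wd; rw [maxd_smul_pos hV a k hk, mind_smul_pos hV a k hk]; ring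

lemma wd_neg (a : V3) : wd V hV (-a) = wd V hV a := by
  have h1 : maxd V hV (-a) = -(mind V hV a) := by
    apply le_antisymm
    · apply Finset.sup'_le
      intro v hv
      have : dot3 (-a) v = -dot3 a v := by simp [dot3]; ring
      rw [this]
      simp only [neg_le_neg_iff]
      exact mind_le_dot3 hV a hv
    · obtain ⟨v, hv, hveq⟩ := exists_mind hV a
      rw [hveq]
      have : -dot3 a v = dot3 (-a) v := by simp [dot3]; ring
      rw [this]
      exact dot3_le_maxd hV _ hv
  have h2 : mind V hV (-a) = -(maxd V hV a) := by
    apply le_antisymm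
    · obtain ⟨v, hv, hveq⟩ := exists_maxd hV a
      rw [hveq]
      have : -dot3 a v = dot3 (-a) v := by simp [dot3]; ring
      rw [this]
      exact mind_le_dot3 hV _ hv
    · apply Finset.le_inf'
      intro v hv
      have : dot3 (-a) v = -dot3 a v := by simp [dot3]; ring
      rw [this]
      simp only [neg_le_neg_iff]
      exact dot3_le_maxd hV a hv
  unfold wd; rw [h1, h2]; ring

-- real bridge
lemma f_cast (a : V3) (v : V3) :
    (∑ i, (a i : ℝ) * ((v i : ℤ) : ℝ)) = ((dot3 a v : ℤ) : ℝ) := by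
  rw [Fin.sum_univ_three]
  push_cast [dot3]
  ring

lemma isLinear_f (a : V3) : IsLinearMap ℝ (fun p : Fin 3 → ℝ => ∑ i, (a i : ℝ) * p i) := by
  constructor
  · intro x y
    rw [← Finset.sum_add_distrib]
    congr 1; funext i; simp [mul_add]
  · intro c x
    rw [Finset.smul_sum]
    congr 1; funext i; simp; ring

lemma mem_bounds (a : V3) {p : Fin 3 → ℝ} (hp : p ∈ latticePoly3 V) :
    ((mind V hV a : ℤ) : ℝ) ≤ ∑ i, (a i : ℝ) * p i ∧
      ∑ i, (a i : ℝ) * p i ≤ ((maxd V hV a : ℤ) : ℝ) := by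
  set f := fun p : Fin 3 → ℝ => ∑ i, (a i : ℝ) * p i with hf
  have hconv : Convex ℝ {x | ((mind V hV a : ℤ) : ℝ) ≤ f x ∧ f x ≤ ((maxd V hV a : ℤ) : ℝ)} := by
    have h1 : Convex ℝ {x | ((mind V hV a : ℤ) : ℝ) ≤ f x} := convex_halfSpace_ge (isLinear_f a) _
    have h2 : Convex ℝ {x | f x ≤ ((maxd V hV a : ℤ) : ℝ)} := convex_halfSpace_le (isLinear_f a) _
    exact h1.inter h2
  have hsub : latticePoly3 V ⊆ {x | ((mind V hV a : ℤ) : ℝ) ≤ f x ∧ f x ≤ ((maxd V hV a : ℤ) : ℝ)} := by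
    apply convexHull_min _ hconv
    rintro _ ⟨v, hv, rfl⟩
    have hv' : v ∈ V := hv
    constructor
    · show ((mind V hV a : ℤ) : ℝ) ≤ ∑ i, (a i : ℝ) * ((v i : ℤ) : ℝ)
      rw [f_cast a v]
      exact_mod_cast mind_le_dot3 hV a hv'
    · show (∑ i, (a i : ℝ) * ((v i : ℤ) : ℝ)) ≤ ((maxd V hV a : ℤ) : ℝ)
      rw [f_cast a v]
      exact_mod_cast dot3_le_maxd hV a hv'
  exact hsub hp

include hV in
lemma P_nonempty : (latticePoly3 V).Nonempty := by
  obtain ⟨v, hv⟩ := id hV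
  exact ⟨_, subset_convexHull ℝ _ (Set.mem_image_of_mem _ hv)⟩

lemma width3_eq (a : V3) : width3 (latticePoly3 V) a = ((wd V hV a : ℤ) : ℝ) := by
  set f := fun p : Fin 3 → ℝ => ∑ i, (a i : ℝ) * p i with hf
  have hgreat : IsGreatest (f '' latticePoly3 V) ((maxd V hV a : ℤ) : ℝ) := by
    constructor
    · obtain ⟨v, hv, hveq⟩ := exists_maxd hV a
      refine ⟨_, subset_convexHull ℝ _ (Set.mem_image_of_mem _ hv), ?_⟩
      show (∑ i, (a i : ℝ) * ((v i : ℤ) : ℝ)) = ((maxd V hV a : ℤ) : ℝ)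
      rw [f_cast a v, hveq]
    · rintro _ ⟨p, hp, rfl⟩
      exact (mem_bounds hV a hp).2
  have hleast : IsLeast (f '' latticePoly3 V) ((mind V hV a : ℤ) : ℝ) := by
    constructor
    · obtain ⟨v, hv, hveq⟩ := exists_mind hV a
      refine ⟨_, subset_convexHull ℝ _ (Set.mem_image_of_mem _ hv), ?_⟩
      show (∑ i, (a i : ℝ) * ((v i : ℤ) : ℝ)) = ((mind V hV a : ℤ) : ℝ)
      rw [f_cast a v, hveq]
    · rintro _ ⟨p, hp, rfl⟩
      exact (mem_bounds hV a hp).1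
  unfold width3
  rw [hgreat.csSup_eq, hleast.csInf_eq]
  unfold wd
  push_cast
  ring

end W

section Fits
variable {V : Finset V3} (hV : V.Nonempty)

lemma mulVec_apply (A : Matrix (Fin 3) (Fin 3) ℤ) (p : Fin 3 → ℝ) (v : Fin 3 → ℤ) (i : Fin 3) :
    ((A.map (fun z : ℤ => (z : ℝ))).mulVec p + fun j => (v j : ℝ)) i
      = (∑ j, (A i j : ℝ) * p j) + (v i : ℝ) := by
  simp [Matrix.mulVec, Matrix.map_apply, dotProduct, Fin.sum_univ_three]

-- row i of the matrix built from three vectors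
lemma of_rows0 (r0 r1 r2 : V3) : (Matrix.of ![r0, r1, r2]) 0 = r0 := rfl
lemma of_rows1 (r0 r1 r2 : V3) : (Matrix.of ![r0, r1, r2]) 1 = r1 := rfl
lemma of_rows2 (r0 r1 r2 : V3) : (Matrix.of ![r0, r1, r2]) 2 = r2 := rfl

include hV in
lemma coord_mem (r : V3) {p : Fin 3 → ℝ} (hp : p ∈ latticePoly3 V) :
    (∑ j, (r j : ℝ) * p j) + ((-(mind V hV r) : ℤ) : ℝ) ∈ Set.Icc (0:ℝ) ((wd V hV r : ℤ) : ℝ) := by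
  obtain ⟨h1, h2⟩ := mem_bounds hV r hp
  constructor
  · push_cast
    linarith
  · unfold wd
    push_cast
    linarith

include hV in
lemma build_box (r0 r1 r2 : V3) (a b c : ℤ)
    (hdet : dot3 (cross3 r0 r1) r2 = 1 ∨ dot3 (cross3 r0 r1) r2 = -1)
    (h0 : wd V hV r0 ≤ a) (h1 : wd V hV r1 ≤ b) (h2 : wd V hV r2 ≤ c) :
    FitsInBox3 (latticePoly3 V) a b c := by
  classical
  refine ⟨Matrix.of ![r0, r1, r2], ![-(mind V hV r0), -(mind V hV r1), -(mind V hV r2)], ?_, ?_⟩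
  · rw [det_rows]
    exact hdet
  · intro p hp
    have icc_mono : ∀ (r : V3) (k : ℤ), wd V hV r ≤ k →
        Set.Icc (0:ℝ) ((wd V hV r : ℤ) : ℝ) ⊆ Set.Icc (0:ℝ) ((k : ℤ) : ℝ) := by
      intro r k hk
      apply Set.Icc_subset_Icc_right
      exact_mod_cast hk
    refine ⟨?_, ?_, ?_⟩
    · rw [mulVec_apply]
      exact icc_mono r0 a h0 (coord_mem hV r0 hp)
    · rw [mulVec_apply]
      exact icc_mono r1 b h1 (coord_mem hV r1 hp)
    · rw [mulVec_apply]
      exact icc_mono r2 c h2 (coord_mem hV r2 hp)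

include hV in
lemma wd_le_of_forall (r : V3) (v0 : ℤ) (k : ℤ)
    (h : ∀ p ∈ latticePoly3 V, (∑ j, (r j : ℝ) * p j) + (v0 : ℝ) ∈ Set.Icc (0:ℝ) (k : ℝ)) :
    wd V hV r ≤ k := by
  obtain ⟨vmax, hvmax, hmaxeq⟩ := exists_maxd hV r
  obtain ⟨vmin, hvmin, hmineq⟩ := exists_mind hV r
  have hmem : ∀ {v : V3}, v ∈ V → (fun i => ((v i : ℤ) : ℝ)) ∈ latticePoly3 V := by
    intro v hv
    exact subset_convexHull ℝ _ (Set.mem_image_of_mem _ hv)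
  have hA := h _ (hmem hvmax)
  have hB := h _ (hmem hvmin)
  rw [show (∑ j, (r j : ℝ) * ((vmax j : ℤ) : ℝ)) = ((dot3 r vmax : ℤ) : ℝ) from f_cast r vmax] at hA
  rw [show (∑ j, (r j : ℝ) * ((vmin j : ℤ) : ℝ)) = ((dot3 r vmin : ℤ) : ℝ) from f_cast r vmin] at hB
  have h1 : ((dot3 r vmax : ℤ) : ℝ) + (v0 : ℝ) ≤ (k : ℝ) := hA.2
  have h2 : (0:ℝ) ≤ ((dot3 r vmin : ℤ) : ℝ) + (v0 : ℝ) := hB.1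
  have : ((dot3 r vmax - dot3 r vmin : ℤ) : ℝ) ≤ (k : ℝ) := by push_cast; push_cast at h1 h2; linarith
  have hZ : dot3 r vmax - dot3 r vmin ≤ k := by exact_mod_cast this
  unfold wd; omega

-- primitivity of row 0 of a unimodular matrix
lemma row0_primitive (A : Matrix (Fin 3) (Fin 3) ℤ) (hdet : A.det = 1 ∨ A.det = -1) :
    gcd3 (A 0) = 1 := by
  have hd : ((gcd3 (A 0) : ℕ) : ℤ) ∣ A.det := by
    rw [det_rows, dot3_cyc]
    have h0 := gcd3_dvd (A 0) 0
    have h1 := gcd3_dvd (A 0) 1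
    have h2 := gcd3_dvd (A 0) 2
    unfold dot3
    exact dvd_add (dvd_add (h0.mul_left _) (h1.mul_left _)) (h2.mul_left _)
  have : ((gcd3 (A 0) : ℕ) : ℤ) ∣ 1 := by
    rcases hdet with h | h <;> rw [h] at hd
    · exact hd
    · exact (dvd_neg.mp hd)
  exact_mod_cast Int.eq_one_of_dvd_one (by positivity) this

end Fits

section Core
variable {V : Finset V3} (hV : V.Nonempty)

lemma round_div (c k : ℤ) (hk : 0 < k) : ∃ m r : ℤ, c = k * m + r ∧ 2 * |r| ≤ k := by
  set r0 := c % k with hr0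
  have h0 : 0 ≤ r0 := Int.emod_nonneg c hk.ne'
  have h1 : r0 < k := Int.emod_lt_of_pos c hk
  have hdiv : c = k * (c / k) + r0 := (Int.mul_ediv_add_emod c k).symm
  by_cases hle : 2 * r0 ≤ k
  · exact ⟨c / k, r0, hdiv, by rwa [abs_of_nonneg h0]⟩
  · refine ⟨c / k + 1, r0 - k, by linarith [hdiv], ?_⟩
    rw [abs_of_nonpos (by linarith)]
    linarith

lemma round_div_odd (c k : ℤ) (hk : 0 < k) (hodd : Odd k) :
    ∃ m r : ℤ, c = k * m + r ∧ 2 * |r| ≤ k - 1 := by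
  obtain ⟨m, r, h1, h2⟩ := round_div c k hk
  refine ⟨m, r, h1, ?_⟩
  rcases eq_or_lt_of_le h2 with heq | hlt
  · exfalso
    have : Even (2 * |r|) := even_two_mul _
    rw [heq] at this
    exact (Int.not_odd_iff_even.mpr this) hodd
  · omega

include hV in
lemma step1 (a : V3) (ha : gcd3 a = 1) (U : Matrix (Fin 3) (Fin 3) ℤ)
    (hU : U.det = 1 ∨ U.det = -1) (w₂ : ℤ)
    (hu0 : wd V hV (U 0) ≤ w₂) (hu1 : wd V hV (U 1) ≤ w₂) (hwa : wd V hV a ≤ w₂) :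
    ∃ b : V3, gcd3 (cross3 a b) = 1 ∧ wd V hV b ≤ w₂ := by
  have hw2 : 0 ≤ w₂ := le_trans (wd_nonneg hV (U 0)) hu0
  obtain ⟨φ, hφ⟩ := exists_dual a ha
  have hφ' : dot3 φ a = 1 := by rw [dot3_comm]; exact hφ
  have par : ∀ s : V3, cross3 a s = 0 → s = dot3 φ s • a := by
    intro s h
    have t := triple_id φ a s
    rw [h] at t
    have hz : cross3 φ 0 = 0 := by funext i; fin_cases i <;> simp
    rw [hz, hφ', one_smul] at t
    exact (sub_eq_zero.mp t.symm).symm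
  have hchoice : ∃ s : V3, cross3 a s ≠ 0 ∧ wd V hV s ≤ w₂ := by
    by_cases h0 : cross3 a (U 0) = 0
    · by_cases h1 : cross3 a (U 1) = 0
      · exfalso
        have e0 := par _ h0
        have e1 := par _ h1
        have hzero : U.det = 0 := by
          rw [det_rows, e0, e1, cross3_smul_smul, cross3_self, smul_zero, dot3_zero_left]
        rcases hU with h | h <;> omega
      · exact ⟨U 1, h1, hu1⟩
    · exact ⟨U 0, h0, hu0⟩
  obtain ⟨s, hsne, hswd⟩ := hchoice
  set n1 := cross3 a s with hn1
  set k : ℕ := gcd3 n1 with hkdef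
  have hkpos : 0 < k := by
    rcases Nat.eq_zero_or_pos k with h | h
    · exact absurd ((gcd3_eq_zero_iff n1).mp h) hsne
    · exact h
  have hkZ : (0:ℤ) < (k:ℤ) := by exact_mod_cast hkpos
  set n' : V3 := fun i => n1 i / (k:ℤ) with hn'def
  have hkn : (k:ℤ) • n' = n1 := by
    funext i
    simp only [smul_apply3, hn'def]
    exact Int.mul_ediv_cancel' (gcd3_dvd n1 i)
  have hn'prim : gcd3 n' = 1 := by
    set d := gcd3 n' with hd
    have hdvd : ∀ i, ((k * d : ℕ) : ℤ) ∣ n1 i := by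
      intro i
      have h1 : ((d:ℕ):ℤ) ∣ n' i := gcd3_dvd n' i
      have h2 : n1 i = (k:ℤ) * n' i := by rw [← hkn]; simp
      rw [h2]
      push_cast
      exact mul_dvd_mul_left _ h1
    have hdd : ((k * d : ℕ) : ℤ) ∣ ((k:ℕ):ℤ) := dvd_gcd3 n1 _ (hdvd 0) (hdvd 1) (hdvd 2)
    have hdd' : k * d ∣ k * 1 := by simpa using (by exact_mod_cast hdd : k * d ∣ k)
    exact Nat.dvd_one.mp ((Nat.mul_dvd_mul_iff_left hkpos).mp hdd')
  -- decomposition s = c₀ • a + k • h₀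
  set c₀ := dot3 φ s with hc₀
  set h₀ : V3 := -(cross3 φ n') with hh₀
  have hdecomp : s = c₀ • a + (k:ℤ) • h₀ := by
    have t := triple_id φ a s
    rw [hφ', one_smul] at t
    -- t : cross3 φ (cross3 a s) = dot3 φ s • a - s
    have t2 : cross3 φ n1 = c₀ • a - s := t
    have t3 : cross3 φ ((k:ℤ) • n') = c₀ • a - s := by rw [hkn]; exact t2
    rw [cross3_smul_right] at t3
    -- (k:ℤ) • cross3 φ n' = c₀ • a - s
    rw [hh₀, smul_neg, t3]
    abel
  obtain ⟨m, r, hmr, hrb⟩ := round_div c₀ (k:ℤ) hkZ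
  set b : V3 := h₀ + m • a with hbdef
  have hkb : (k:ℤ) • b = s - r • a := by
    rw [hbdef, hdecomp, hmr]
    funext i
    simp
    ring
  have hcrossb : cross3 a b = n' := by
    have h1 : (k:ℤ) • cross3 a b = (k:ℤ) • n' := by
      rw [← cross3_smul_right, hkb]
      have : s - r • a = s + (-r) • a := by funext i; simp; ring
      rw [this, cross3_add_right, cross3_smul_right, cross3_self, smul_zero, add_zero, hkn]
    funext i
    have := congrFun h1 i
    simp only [smul_apply3] at this
    exact mul_left_cancel₀ hkZ.ne' this
  refine ⟨b, by rw [hcrossb]; exact hn'prim, ?_⟩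
  -- width bound
  have hcombo : s - r • a = (1:ℤ) • s + (-r) • a + (0:ℤ) • a := by
    funext i; simp; ring
  have hwdkb : (k:ℤ) * wd V hV b = wd V hV ((k:ℤ) • b) := (wd_smul_pos hV b _ hkZ).symm
  have hbound : (k:ℤ) * wd V hV b ≤ wd V hV s + |r| * wd V hV a := by
    rw [hwdkb, hkb, hcombo]
    have := wd_combo hV 1 (-r) 0 s a a
    simpa using this
  have hann : 0 ≤ wd V hV a := wd_nonneg hV a
  have hbnn : 0 ≤ wd V hV b := wd_nonneg hV b
  rcases eq_or_lt_of_le (by exact_mod_cast hkpos : (1:ℤ) ≤ (k:ℤ)) with hk1 | hk2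
  · -- k = 1 : r = 0
    have hr0 : r = 0 := by
      have h1 : 2 * |r| ≤ 1 := by rw [← hk1] at hrb; exact hrb
      have h2 := abs_nonneg r
      have h3 : |r| ≤ 0 := by linarith
      exact abs_eq_zero.mp (le_antisymm h3 h2)
    rw [← hk1, hr0] at hbound
    simp at hbound
    linarith
  · -- k ≥ 2
    have hk2' : (2:ℤ) ≤ (k:ℤ) := hk2
    have c1 : 2 * ((k:ℤ) * wd V hV b) ≤ 2 * wd V hV s + (2 * |r|) * wd V hV a := by linarith
    have c2 : (2 * |r|) * wd V hV a ≤ (k:ℤ) * wd V hV a :=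
      mul_le_mul_of_nonneg_right hrb hann
    have c3 : (k:ℤ) * wd V hV a ≤ (k:ℤ) * w₂ := mul_le_mul_of_nonneg_left hwa (by linarith)
    have c4 : 2 * ((k:ℤ) * wd V hV b) ≤ 2 * w₂ + (k:ℤ) * w₂ := by linarith
    have c5 : 2 * w₂ + (k:ℤ) * w₂ ≤ 2 * (k:ℤ) * w₂ := by nlinarith
    have c6 : 2 * (k:ℤ) * wd V hV b ≤ 2 * (k:ℤ) * w₂ := by linarith
    have hpos : (0:ℤ) < 2 * (k:ℤ) := by linarith
    exact le_of_mul_le_mul_left (by linarith [c6]) hpos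

include hV in
lemma step2 (a b : V3) (hab : gcd3 (cross3 a b) = 1) (X : Matrix (Fin 3) (Fin 3) ℤ)
    (hX : X.det = 1 ∨ X.det = -1) (ls : ℤ)
    (hx : ∀ i, wd V hV (X i) ≤ ls) (hwa : wd V hV a ≤ ls) (hwb : wd V hV b ≤ ls) :
    ∃ t : V3, dot3 (cross3 a b) t = 1 ∧ wd V hV t ≤ ls := by
  have hls : 0 ≤ ls := le_trans (wd_nonneg hV (X 0)) (hx 0)
  set n := cross3 a b with hn
  obtain ⟨t₀, ht₀⟩ := exists_dual n hab
  -- odd level exists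
  have hodd : ∃ i : Fin 3, Odd (dot3 n (X i)) := by
    by_contra hcon
    push_neg at hcon
    have heven : ∀ i, Even (dot3 n (X i)) := fun i => Int.not_odd_iff_even.mp (hcon i)
    have hcr := cramer3 (X 0) (X 1) (X 2) t₀
    have hD : dot3 (cross3 (X 0) (X 1)) (X 2) = X.det := (det_rows X).symm
    have happ : dot3 n (dot3 (cross3 (X 1) (X 2)) t₀ • X 0 + dot3 (cross3 (X 2) (X 0)) t₀ • X 1
        + dot3 (cross3 (X 0) (X 1)) t₀ • X 2) = dot3 n (dot3 (cross3 (X 0) (X 1)) (X 2) • t₀) := by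
      rw [hcr]
    rw [dot3_add_right, dot3_add_right, dot3_smul_right, dot3_smul_right, dot3_smul_right,
      dot3_smul_right, ht₀, mul_one, hD] at happ
    have hevenL : Even (X.det) := by
      rw [← happ]
      obtain ⟨u0, hu0⟩ := heven 0
      obtain ⟨u1, hu1⟩ := heven 1
      obtain ⟨u2, hu2⟩ := heven 2
      rw [hu0, hu1, hu2]
      exact ⟨dot3 (cross3 (X 1) (X 2)) t₀ * u0 + dot3 (cross3 (X 2) (X 0)) t₀ * u1
        + dot3 (cross3 (X 0) (X 1)) t₀ * u2, by ring⟩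
    rcases hX with h | h <;> rw [h] at hevenL <;> simp [Int.even_iff] at hevenL
  obtain ⟨i, hi⟩ := hodd
  -- make level positive
  have hsign : ∃ g' : V3, dot3 n g' = |dot3 n (X i)| ∧ wd V hV g' ≤ ls := by
    rcases le_or_gt 0 (dot3 n (X i)) with h | h
    · exact ⟨X i, by rw [abs_of_nonneg h], hx i⟩
    · refine ⟨-(X i), by rw [dot3_neg_right, abs_of_neg h], ?_⟩
      rw [wd_neg hV]
      exact hx i
  obtain ⟨g', hg'dot, hg'wd⟩ := hsign
  set lam := |dot3 n (X i)| with hlam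
  have hlampos : 0 < lam := abs_pos.mpr (by
    intro h
    rw [h] at hi
    exact (Int.not_odd_iff_even.mpr Even.zero) hi)
  have hlamodd : Odd lam := by
    rcases abs_choice (dot3 n (X i)) with h | h
    · rw [hlam, h]; exact hi
    · rw [hlam, h]; exact hi.neg
  -- G = g' - lam • t₀ has level 0
  set G : V3 := g' - lam • t₀ with hG
  have hGn : dot3 n G = 0 := by
    rw [hG, dot3_sub_right, dot3_smul_right, ht₀, hg'dot, hlam]; ring
  -- coefficients of G in basis (a, b, t₀)
  set c₁ := dot3 (cross3 b t₀) G with hc₁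
  set c₂ := dot3 (cross3 t₀ a) G with hc₂
  have hGdecomp : G = c₁ • a + c₂ • b := by
    have hcr := cramer3 a b t₀ G
    rw [← hn] at hcr
    rw [hGn, zero_smul, add_zero, ht₀, one_smul] at hcr
    rw [← hcr, hc₁, hc₂]
  obtain ⟨m₁, r₁, hm₁, hr₁⟩ := round_div_odd c₁ lam hlampos hlamodd
  obtain ⟨m₂, r₂, hm₂, hr₂⟩ := round_div_odd c₂ lam hlampos hlamodd
  set t : V3 := t₀ + m₁ • a + m₂ • b with ht
  have hdt : dot3 n t = 1 := by
    rw [ht, dot3_add_right, dot3_add_right, dot3_smul_right, dot3_smul_right, ht₀, hn,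
      dot3_cross_left, dot3_cross_right]
    ring
  have hteq : lam • t = (1:ℤ) • g' + (-r₁) • a + (-r₂) • b := by
    have hGc := hGdecomp
    rw [hG] at hGc
    -- g' - lam • t₀ = c₁ • a + c₂ • b
    funext j
    have hj := congrFun hGc j
    simp only [sub_apply3, smul_apply3, add_apply3] at hj
    simp only [ht, smul_apply3, add_apply3, one_mul]
    rw [hm₁, hm₂] at hj
    linear_combination (-1 : ℤ) * hj
  have hwdt : lam * wd V hV t ≤ wd V hV g' + |r₁| * wd V hV a + |r₂| * wd V hV b := by
    rw [← wd_smul_pos hV t lam hlampos, hteq]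
    have := wd_combo hV 1 (-r₁) (-r₂) g' a b
    simpa using this
  have han_ : 0 ≤ wd V hV a := wd_nonneg hV a
  have hbn_ : 0 ≤ wd V hV b := wd_nonneg hV b
  have c1 : 2 * (lam * wd V hV t) ≤ 2 * ls + (2*|r₁|) * wd V hV a + (2*|r₂|) * wd V hV b := by
    linarith
  have c2 : (2*|r₁|) * wd V hV a ≤ (lam - 1) * ls := by
    calc (2*|r₁|) * wd V hV a ≤ (lam - 1) * wd V hV a := mul_le_mul_of_nonneg_right hr₁ han_
      _ ≤ (lam - 1) * ls := mul_le_mul_of_nonneg_left hwa (by linarith)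
  have c3 : (2*|r₂|) * wd V hV b ≤ (lam - 1) * ls := by
    calc (2*|r₂|) * wd V hV b ≤ (lam - 1) * wd V hV b := mul_le_mul_of_nonneg_right hr₂ hbn_
      _ ≤ (lam - 1) * ls := mul_le_mul_of_nonneg_left hwb (by linarith)
  have c4 : 2 * (lam * wd V hV t) ≤ 2 * (lam * ls) := by linarith
  have c5 : lam * wd V hV t ≤ lam * ls := by linarith
  exact ⟨t, hdt, le_of_mul_le_mul_left c5 hlampos⟩

end Core


/-- The set of triples `(a,b,c)` such that some affine unimodular image of `P` lies in
`[0,a] × [0,b] × [0,c]` has a minimum (for the product order) at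
`(w(P), w₂(P), ls_□(P))`: (1) `P` fits unimodularly in
`[0, w(P)] × [0, w₂(P)] × [0, ls_□(P)]`, and (2) whenever `P` fits unimodularly in
`[0,a] × [0,b] × [0,c]` with `a ≤ b ≤ c`, we have `w(P) ≤ a`, `w₂(P) ≤ b` and
`ls_□(P) ≤ c`. -/
theorem fitsInBox3_min (V : Finset (Fin 3 → ℤ)) (hV : V.Nonempty)
    (P : Set (Fin 3 → ℝ)) (hP : P = latticePoly3 V) (w w₂ ls : ℤ)
    (hw : IsLeast (widthSet3 P) (w : ℝ))
    (hw₂ : IsLeast {k : ℤ | FitsInSlab3 P k} w₂)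
    (hls : IsLeast {k : ℤ | FitsInCube3 P k} ls) :
    FitsInBox3 P w w₂ ls ∧
      ∀ a b c : ℤ, a ≤ b → b ≤ c → FitsInBox3 P a b c → w ≤ a ∧ w₂ ≤ b ∧ ls ≤ c := by
  subst hP
  -- helper: width bound from coordinate membership
  have wd_from_mem : ∀ (A : Matrix (Fin 3) (Fin 3) ℤ) (v : Fin 3 → ℤ) (i : Fin 3) (k : ℤ),
      (∀ p ∈ latticePoly3 V,
        ((A.map (fun z : ℤ => (z : ℝ))).mulVec p + fun j => (v j : ℝ)) i ∈ Set.Icc (0:ℝ) (k:ℝ)) →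
      wd V hV (A i) ≤ k := by
    intro A v i k h
    refine wd_le_of_forall hV (A i) (v i) k ?_
    intro p hp
    rw [← mulVec_apply]
    exact h p hp
  -- helper: w is a lower bound for widths of primitive rows of unimodular matrices
  have w_le_row0 : ∀ (A : Matrix (Fin 3) (Fin 3) ℤ), (A.det = 1 ∨ A.det = -1) →
      w ≤ wd V hV (A 0) := by
    intro A hdet
    have hprim : gcd3 (A 0) = 1 := row0_primitive A hdet
    have hmem : width3 (latticePoly3 V) (A 0) ∈ widthSet3 (latticePoly3 V) :=
      ⟨A 0, hprim, rfl⟩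
    have := hw.2 hmem
    rw [width3_eq hV (A 0)] at this
    exact_mod_cast this
  -- extract slab data
  obtain ⟨U, vU, hdetU, hmemU⟩ := hw₂.1
  have hu0 : wd V hV (U 0) ≤ w₂ := wd_from_mem U vU 0 w₂ (fun p hp => (hmemU p hp).1)
  have hu1 : wd V hV (U 1) ≤ w₂ := wd_from_mem U vU 1 w₂ (fun p hp => (hmemU p hp).2)
  -- extract cube data
  obtain ⟨X, vX, hdetX, hmemX⟩ := hls.1
  have hx : ∀ i, wd V hV (X i) ≤ ls := fun i => wd_from_mem X vX i ls (fun p hp => hmemX p hp i)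
  -- basic inequalities
  have hw_le_w2 : w ≤ w₂ := le_trans (w_le_row0 U hdetU) hu0
  have hw2_le_ls : w₂ ≤ ls := by
    apply hw₂.2
    exact ⟨X, vX, hdetX, fun p hp => ⟨hmemX p hp 0, hmemX p hp 1⟩⟩
  -- the minimal-width direction
  obtain ⟨a0, hgcd_a0, hwidtha⟩ := hw.1
  have hwd_a0 : wd V hV a0 = w := by
    have h1 := width3_eq hV a0
    rw [hwidtha] at h1
    exact_mod_cast h1.symm
  -- step 1 : b
  obtain ⟨b, hbprim, hbwd⟩ := step1 hV a0 hgcd_a0 U hdetU w₂ hu0 hu1 (by omega)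
  -- step 2 : t
  obtain ⟨t, hdt, htwd⟩ := step2 hV a0 b hbprim X hdetX ls hx (by omega) (by omega)
  constructor
  · exact build_box hV a0 b t w w₂ ls (Or.inl hdt) (le_of_eq hwd_a0) hbwd htwd
  · rintro a b c hab hbc ⟨A, v, hdet, hmem⟩
    have hICC : ∀ (x y : ℤ), x ≤ y → Set.Icc (0:ℝ) (x:ℝ) ⊆ Set.Icc (0:ℝ) (y:ℝ) := by
      intro x y hxy
      apply Set.Icc_subset_Icc_right
      exact_mod_cast hxy
    refine ⟨?_, ?_, ?_⟩
    · -- w ≤ a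
      have h1 := w_le_row0 A hdet
      have h2 : wd V hV (A 0) ≤ a := wd_from_mem A v 0 a (fun p hp => (hmem p hp).1)
      omega
    · -- w₂ ≤ b
      apply hw₂.2
      exact ⟨A, v, hdet, fun p hp => ⟨hICC a b hab (hmem p hp).1, (hmem p hp).2.1⟩⟩
    · -- ls ≤ c
      apply hls.2
      refine ⟨A, v, hdet, fun p hp => ?_⟩
      intro i
      fin_cases i
      · exact hICC a c (le_trans hab hbc) (hmem p hp).1
      · exact hICC b c hbc (hmem p hp).2.1
      · exact (hmem p hp).2.2
end
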